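/- arXiv:math/0209348 — 6 statements merged into one kernel-verified Lean document; each statement's English description precedes it below -/
import Mathlib

section
/- If w is a closed walk of even length 2l (l ≥ 2) in a graph G that is minimal (no two consecutive edges, cyclically, are equal), then w contains a cycle. -/
open SimpleGraph
variable {V : Type*}

/-- A closed walk is minimal if no two cyclically consecutive edges are equal. -/
def IsMinimalClosedWalk {G : SimpleGraph V} {v : V} (w : G.Walk v v) : Prop :=
  ∀ i : ℕ, i < w.edges.length →
    w.edges[i]? ≠ w.edges[(i + 1) % w.edges.length]?

/-- A closed walk contains a cycle if after a cyclic rotation some initial segment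
of its edges is the edge sequence of a cycle. -/
def WalkContainsCycle [DecidableEq V] {G : SimpleGraph V} {v : V} (w : G.Walk v v) : Prop :=
  ∃ (u : V) (hu : u ∈ w.support) (c : G.Walk u u), c.IsCycle ∧ c.edges <+: (w.rotate u hu).edges

namespace SimpleGraph.Walk
variable {V : Type*} {G : SimpleGraph V}

/-- Take the first `n` darts of a walk. -/

def takeN {u v : V} : (p : G.Walk u v) → (n : ℕ) → G.Walk u (p.getVert n)
  | p, 0 => (Walk.nil).copy rfl (getVert_zero p).symm
  | .nil, _ + 1 => .nil
  | .cons h q, (n + 1) => cons h (q.takeN n)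

@[simp] lemma takeN_nil {u : V} (n : ℕ) : (Walk.nil : G.Walk u u).takeN n = .nil := by
  cases n <;> rfl

@[simp] lemma takeN_zero {u v : V} (p : G.Walk u v) :
    p.takeN 0 = Walk.nil.copy rfl (getVert_zero p).symm := by cases p <;> rfl

@[simp] lemma takeN_cons_succ {u v w : V} (h : G.Adj u v) (q : G.Walk v w) (n : ℕ) :
    (cons h q).takeN (n + 1) = cons h (q.takeN n) := rfl

lemma length_takeN {u v : V} (p : G.Walk u v) (n : ℕ) :
    (p.takeN n).length = min n p.length := by
  induction p generalizing n with
  | nil => simp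
  | cons h q ih =>
    cases n with
    | zero => simp
    | succ n => simp [ih, Nat.succ_min_succ]

lemma edges_takeN {u v : V} (p : G.Walk u v) (n : ℕ) :
    (p.takeN n).edges = p.edges.take n := by
  induction p generalizing n with
  | nil => simp
  | cons h q ih =>
    cases n with
    | zero => simp
    | succ n => simp [ih]

lemma getVert_takeN {u v : V} (p : G.Walk u v) (n k : ℕ) :
    (p.takeN n).getVert k = p.getVert (min k n) := by
  induction p generalizing n k with
  | nil => simp
  | cons h q ih =>
    cases n with
    | zero => simp
    | succ n =>
      cases k with
      | zero => simp
      | succ k => simp [getVert_cons_succ, ih, Nat.succ_min_succ]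

lemma length_drop {u v : V} (p : G.Walk u v) (n : ℕ) :
    (p.drop n).length = p.length - n := by
  induction p generalizing n with
  | nil => simp [drop]
  | cons h q ih =>
    cases n with
    | zero => simp [drop]
    | succ n => simpa [drop] using ih n

lemma getVert_drop {u v : V} (p : G.Walk u v) (n k : ℕ) :
    (p.drop n).getVert k = p.getVert (n + k) := by
  induction p generalizing n with
  | nil => simp [drop]
  | cons h q ih =>
    cases n with
    | zero => simp [drop]
    | succ n =>
      simpa [drop, Nat.succ_add, getVert_cons_succ] using ih n

lemma edges_getElem? {u v : V} (p : G.Walk u v) (k : ℕ) (hk : k < p.length) :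
    p.edges[k]? = some s(p.getVert k, p.getVert (k + 1)) := by
  induction p generalizing k with
  | nil => simp at hk
  | cons h q ih =>
    cases k with
    | zero => simp
    | succ k =>
      simp only [edges_cons, getVert_cons_succ]
      rw [List.getElem?_cons_succ]
      exact ih k (by simpa using hk)

lemma support_getElem? {u v : V} (p : G.Walk u v) (k : ℕ) (hk : k ≤ p.length) :
    p.support[k]? = some (p.getVert k) := by
  induction p generalizing k with
  | nil =>
    simp only [length_nil, Nat.le_zero] at hk
    subst hk
    simp
  | cons h q ih =>
    cases k with
    | zero => simp
    | succ k =>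
      simp only [support_cons, getVert_cons_succ]
      rw [List.getElem?_cons_succ]
      exact ih k (by simpa using hk)

lemma dropUntil_eq_drop' [DecidableEq V] {u v : V} (p : G.Walk u v) (i : ℕ) (hi : i ≤ p.length)
    (hfirst : ∀ k < i, p.getVert k ≠ p.getVert i) (hu : p.getVert i ∈ p.support) :
    p.dropUntil (p.getVert i) hu = p.drop i := by
  induction p generalizing i with
  | nil =>
    simp only [length_nil, Nat.le_zero] at hi
    subst hi
    rfl
  | cons h q ih =>
    cases i with
    | zero =>
      simp only [getVert_zero] at hu ⊢
      rw [dropUntil]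
      simp [drop]
      rfl
    | succ i =>
      have hne : _ ≠ (cons h q).getVert (i+1) := fun he => hfirst 0 (Nat.succ_pos _) (by simpa using he)
      simp only [getVert_cons_succ] at hne hu ⊢
      rw [dropUntil]
      rw [dif_neg hne]
      simp only [drop]
      rw [ih i (by simpa using hi) (fun k hk => by simpa using hfirst (k+1) (by omega))]

end SimpleGraph.Walk

/-- A minimal closed walk of even length `2l` with `l ≥ 2` contains a cycle. -/
theorem minimal_even_closed_walk_contains_cycle [DecidableEq V] {G : SimpleGraph V} {v : V}
    (w : G.Walk v v) (l : ℕ) (hl : 2 ≤ l) (hlen : w.length = 2 * l)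
    (hmin : IsMinimalClosedWalk w) : WalkContainsCycle w := by
  classical
  have hlenE : w.edges.length = w.length := Walk.length_edges w
  -- the minimality hypothesis, in terms of `getVert`
  have hmin' : ∀ k, k + 1 < w.length →
      s(w.getVert k, w.getVert (k+1)) ≠ s(w.getVert (k+1), w.getVert (k+2)) := by
    intro k hk h
    apply hmin k (by omega)
    rw [hlenE, Nat.mod_eq_of_lt (by omega)]
    rw [w.edges_getElem? k (by omega), w.edges_getElem? (k+1) hk, h]
  -- j : minimal endpoint of a repeated pair
  have hPex : ∃ j, j ≤ w.length ∧ ∃ i, i < j ∧ w.getVert i = w.getVert j :=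
    ⟨w.length, le_rfl, 0, by omega, by simp [Walk.getVert_length]⟩
  obtain ⟨hjn, i', hi'j, hi'⟩ := Nat.find_spec hPex
  set j := Nat.find hPex with hjdef
  have jmin : ∀ m, m < j → ¬ (m ≤ w.length ∧ ∃ i, i < m ∧ w.getVert i = w.getVert m) :=
    fun m hm => Nat.find_min hPex hm
  -- i : first occurrence of the repeated vertex
  have hQex : ∃ k, w.getVert k = w.getVert j := ⟨i', hi'⟩
  obtain hQi := Nat.find_spec hQex
  set i := Nat.find hQex with hidef
  have imin : ∀ k, k < i → w.getVert k ≠ w.getVert j := fun k hk => Nat.find_min hQex hk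
  have hij : i < j := lt_of_le_of_lt (Nat.find_le hi') hi'j
  -- distinctness of the vertices strictly inside the segment
  have key : ∀ k k', i ≤ k → k < k' → k' ≤ j → ¬(k = i ∧ k' = j) →
      w.getVert k ≠ w.getVert k' := by
    intro k k' hk hkk' hk'j hne heq
    rcases lt_or_eq_of_le hk'j with h | rfl
    · exact jmin k' h ⟨by omega, k, hkk', heq⟩
    · rcases lt_or_eq_of_le hk with h | rfl
      · exact jmin k hkk' ⟨by omega, i, h, hQi.trans heq.symm⟩
      · exact hne ⟨rfl, rfl⟩
  -- the segment has length at least 3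
  have hd1 : j ≠ i + 1 := by
    intro h
    have hadj := w.adj_getVert_succ (i := i) (by omega)
    rw [← h, ← hQi] at hadj
    exact G.loopless.irrefl _ hadj
  have hd2 : j ≠ i + 2 := by
    intro h
    apply hmin' i (by omega)
    rw [show i + 2 = j from h.symm, ← hQi]
    exact Sym2.eq_swap
  have hd3 : i + 3 ≤ j := by omega
  -- construct the cycle
  have humem : w.getVert i ∈ w.support := w.getVert_mem_support i
  have hgd : (w.drop i).getVert (j - i) = w.getVert i := by
    rw [Walk.getVert_drop, show i + (j - i) = j by omega]
    exact hQi.symm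
  set c : G.Walk (w.getVert i) (w.getVert i) := ((w.drop i).takeN (j - i)).copy rfl hgd with hcdef
  have hlc : c.length = j - i := by
    rw [hcdef, Walk.length_copy, Walk.length_takeN, Walk.length_drop]
    omega
  have hgc : ∀ k, k ≤ j - i → c.getVert k = w.getVert (i + k) := by
    intro k hk
    rw [hcdef, Walk.getVert_copy, Walk.getVert_takeN, Walk.getVert_drop, min_eq_left hk]
  have hcE : ∀ k, k < j - i → c.edges[k]? = some s(w.getVert (i+k), w.getVert (i+k+1)) := by
    intro k hk
    rw [c.edges_getElem? k (by omega), hgc k (by omega), hgc (k+1) (by omega),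
      show i + (k+1) = i + k + 1 by omega]
  refine ⟨w.getVert i, humem, c, ⟨⟨⟨?_⟩, ?_⟩, ?_⟩, ?_⟩
  · -- edges nodup
    rw [List.nodup_iff_getElem?_ne_getElem?]
    intro a b hab hb
    rw [c.length_edges, hlc] at hb
    rw [hcE a (by omega), hcE b hb]
    intro hsome
    rw [Option.some_inj, Sym2.eq_iff] at hsome
    rcases hsome with ⟨h1, h2⟩ | ⟨h1, h2⟩
    · exact key (i+a) (i+b) (by omega) (by omega) (by omega)
        (by rintro ⟨-, h⟩; omega) h1
    · rcases eq_or_lt_of_le (show a + 1 ≤ b by omega) with heq | hlt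
      · apply hmin' (i+a) (by omega)
        rw [show i + a + 2 = i + b + 1 by omega, ← h1]
        exact Sym2.eq_swap
      · exact key (i+a+1) (i+b) (by omega) (by omega) (by omega)
          (by rintro ⟨h, -⟩; omega) h2
  · -- not nil
    intro hcnil
    have := congrArg Walk.length hcnil
    rw [hlc, Walk.length_nil] at this
    omega
  · -- support tail nodup
    rw [List.nodup_iff_getElem?_ne_getElem?]
    intro a b hab hb
    have hsl : c.support.length = (j - i) + 1 := by rw [Walk.length_support, hlc]
    have hb' : b < j - i := by
      rw [List.length_tail, hsl] at hb
      omega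
    rw [← List.drop_one, List.getElem?_drop, List.getElem?_drop,
      c.support_getElem? (1+a) (by omega), c.support_getElem? (1+b) (by omega)]
    intro hsome
    rw [Option.some_inj] at hsome
    rw [hgc (1+a) (by omega), hgc (1+b) (by omega)] at hsome
    exact key (i+(1+a)) (i+(1+b)) (by omega) (by omega) (by omega)
      (by rintro ⟨h, -⟩; omega) hsome
  · -- prefix
    have hdrop : w.dropUntil (w.getVert i) humem = w.drop i :=
      w.dropUntil_eq_drop' i (by omega) (fun k hk he => imin k hk (he.trans hQi)) humem
    rw [Walk.rotate, Walk.edges_append, hdrop, hcdef, Walk.edges_copy, Walk.edges_takeN]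
    exact (List.take_prefix _ _).trans (List.prefix_append _ _)
end

section
/- Let G be a triangle-free graph in which any two chordless cycles share at most one edge. If two chordless cycles c1 and c2 have a common edge e, then there is no edge of G connecting a vertex of c1 to a vertex of c2 other than e itself. -/
open SimpleGraph
variable {V : Type*}

/-- A cycle is chordless if every edge of `G` joining two vertices of the cycle is an
edge of the cycle (equivalently, no edge of `G` joins two non-consecutive vertices). -/
def IsChordlessCycle {G : SimpleGraph V} {v : V} (c : G.Walk v v) : Prop :=
  c.IsCycle ∧ ∀ x y, x ∈ c.support → y ∈ c.support → G.Adj x y → s(x, y) ∈ c.edges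

/-- The edge sets of chordless cycles of `G`. -/
def chordlessCycleSets (G : SimpleGraph V) : Set (Set (Sym2 V)) :=
  {S | ∃ (v : V) (c : G.Walk v v), IsChordlessCycle c ∧ S = {e | e ∈ c.edges}}

/-- `G` is triangle-free: it has no cycle of length 3. -/
def TriangleFree (G : SimpleGraph V) : Prop :=
  ∀ (v : V) (c : G.Walk v v), c.IsCycle → c.length ≠ 3

/-- Any two (distinct) chordless cycles of `G` share at most one edge. -/
def ChordlessCyclesShareAtMostOneEdge (G : SimpleGraph V) : Prop :=
  ∀ S ∈ chordlessCycleSets G, ∀ T ∈ chordlessCycleSets G, S ≠ T → (S ∩ T).ncard ≤ 1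

section AuxLemmas

lemma mem_edge_of_mem_support_aux {G : SimpleGraph V} {u v : V} (W : G.Walk u v) {z : V}
    (hz : z ∈ W.support) : z = v ∨ ∃ d ∈ W.edges, z ∈ d := by
  induction W with
  | nil => left; simpa using hz
  | @cons a b c h q ih =>
    rw [Walk.support_cons, List.mem_cons] at hz
    rcases hz with rfl | hz
    · right; exact ⟨s(z, b), by simp, Sym2.mem_mk_left _ _⟩
    · rcases ih hz with rfl | ⟨d, hd, hzd⟩
      · left; rfl
      · right; exact ⟨d, by simp [hd], hzd⟩

lemma cycle_support_mem_edge_aux {G : SimpleGraph V} {r : V} (Z : G.Walk r r) (hZ : Z.IsCycle)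
    {z : V} (hz : z ∈ Z.support) : ∃ d ∈ Z.edges, z ∈ d := by
  rcases mem_edge_of_mem_support_aux Z hz with rfl | h
  · cases Z with
    | nil => exact absurd hZ Walk.IsCycle.not_of_nil
    | @cons _ b _ h q => exact ⟨s(z, b), by simp, Sym2.mem_mk_left _ _⟩
  · exact h

lemma mem_support_of_mem_edges_aux {G : SimpleGraph V} {u v : V} (W : G.Walk u v) {d : Sym2 V}
    {z : V} (hd : d ∈ W.edges) (hz : z ∈ d) : z ∈ W.support := by
  induction d using Sym2.ind with
  | _ a b =>
    rcases Sym2.mem_iff.mp hz with rfl | rfl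
    · exact W.fst_mem_support_of_mem_edges hd
    · exact W.snd_mem_support_of_mem_edges hd

lemma edges_of_length_one_aux {G : SimpleGraph V} {u v : V} (W : G.Walk u v)
    (h : W.length = 1) : s(u, v) ∈ W.edges := by
  cases W with
  | nil => simp at h
  | @cons _ b _ hadj q =>
    have hq : q.length = 0 := by simpa using h
    have hb := Walk.eq_of_length_eq_zero hq
    subst hb
    simp

lemma cycle_takeUntil_isPath_aux [DecidableEq V] {G : SimpleGraph V} {u v : V} (C : G.Walk u u)
    (hC : C.IsCycle) (hv : v ∈ C.support) (hne : v ≠ u) :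
    (C.takeUntil v hv).IsPath ∧ (C.dropUntil v hv).IsPath := by
  set T := C.takeUntil v hv with hT
  set D := C.dropUntil v hv with hD
  have hspec : T.append D = C := C.take_spec hv
  have hsup : C.support = T.support ++ D.support.tail := by
    rw [← hspec, Walk.support_append]
  have hTc : T.support = u :: T.support.tail := T.support_eq_cons
  have htail : C.support.tail = T.support.tail ++ D.support.tail := by
    have : C.support = u :: (T.support.tail ++ D.support.tail) := by
      rw [hsup, hTc]; rfl
    rw [this]; rfl
  have hnd : (T.support.tail ++ D.support.tail).Nodup := by
    rw [← htail]; exact hC.2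
  rw [List.nodup_append] at hnd
  obtain ⟨hnd1, hnd2, hdisj⟩ := hnd
  have hvT : v ∈ T.support.tail := by
    have : v ∈ T.support := T.end_mem_support
    rw [hTc, List.mem_cons] at this
    rcases this with h | h
    · exact absurd h hne
    · exact h
  have huD : u ∈ D.support.tail := by
    have : u ∈ D.support := D.end_mem_support
    rw [D.support_eq_cons, List.mem_cons] at this
    rcases this with h | h
    · exact absurd h.symm hne
    · exact h
  constructor
  · rw [Walk.isPath_def, hTc, List.nodup_cons]
    exact ⟨fun hu => hdisj u hu u huD rfl, hnd1⟩
  · rw [Walk.isPath_def, D.support_eq_cons, List.nodup_cons]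
    exact ⟨fun hv' => hdisj v hvT v hv' rfl, hnd2⟩

lemma cycle_split_aux [DecidableEq V] {G : SimpleGraph V} {r u v : V} (Z : G.Walk r r)
    (hZ : Z.IsCycle) (hu : u ∈ Z.support) (hv : v ∈ Z.support) (hne : u ≠ v) :
    ∃ (P : G.Walk u v) (Q : G.Walk v u), P.IsPath ∧ Q.IsPath ∧
      (P.edges ++ Q.edges).Perm Z.edges ∧ P.length + Q.length = Z.length := by
  have hrot : Z.rotate u hu = (Z.dropUntil u hu).append (Z.takeUntil u hu) := rfl
  have hR : (Z.rotate u hu).IsCycle := hZ.rotate hu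
  have hvR : v ∈ (Z.rotate u hu).support := by
    rw [hrot, Walk.mem_support_append_iff]
    rw [← Z.take_spec hu, Walk.mem_support_append_iff] at hv
    tauto
  obtain ⟨hP, hQ⟩ := cycle_takeUntil_isPath_aux (Z.rotate u hu) hR hvR hne.symm
  refine ⟨(Z.rotate u hu).takeUntil v hvR, (Z.rotate u hu).dropUntil v hvR, hP, hQ, ?_, ?_⟩
  · have hspec := (Z.rotate u hu).take_spec hvR
    have he : (Z.rotate u hu).edges
        = ((Z.rotate u hu).takeUntil v hvR).edges ++ ((Z.rotate u hu).dropUntil v hvR).edges := by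
      conv_lhs => rw [← hspec]
      rw [Walk.edges_append]
    rw [← he]
    exact (Z.rotate_edges u hu).perm
  · have hspec := (Z.rotate u hu).take_spec hvR
    have h1 : ((Z.rotate u hu).takeUntil v hvR).length + ((Z.rotate u hu).dropUntil v hvR).length
        = (Z.rotate u hu).length := by
      have := congrArg Walk.length hspec
      rwa [Walk.length_append] at this
    have h2 : (Z.rotate u hu).length = Z.length := by
      have hs := congrArg Walk.length (Z.take_spec hu)
      rw [Walk.length_append] at hs
      rw [hrot, Walk.length_append]
      omega
    omega

end AuxLemmas

/-- If two distinct chordless cycles `c1, c2` of a triangle-free graph satisfying the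
"at most one common edge" condition have a common edge `e`, then no edge of `G` joins a
vertex lying only on `c1` to a vertex lying only on `c2`. -/
theorem no_edge_connecting_chordless_cycles {G : SimpleGraph V}
    (htf : TriangleFree G) (hci : ChordlessCyclesShareAtMostOneEdge G)
    {v1 v2 : V} (c1 : G.Walk v1 v1) (c2 : G.Walk v2 v2)
    (h1 : IsChordlessCycle c1) (h2 : IsChordlessCycle c2)
    (hne : {e | e ∈ c1.edges} ≠ {e | e ∈ c2.edges})
    (e : Sym2 V) (he1 : e ∈ c1.edges) (he2 : e ∈ c2.edges) :
    ∀ x y, x ∈ c1.support → x ∉ c2.support → y ∈ c2.support → y ∉ c1.support →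
      ¬ G.Adj x y := by
  classical
  intro x y hx1 hx2 hy2 hy1 hadj
  -- a common vertex `a` of the two cycles, coming from the common edge `e`
  have hkey : ∀ (e' : Sym2 V), e' ∈ c1.edges → e' ∈ c2.edges →
      ∃ a, a ∈ c1.support ∧ a ∈ c2.support := by
    intro e'
    induction e' using Sym2.ind with
    | _ a b =>
      intro h1' h2'
      exact ⟨a, c1.fst_mem_support_of_mem_edges h1', c2.fst_mem_support_of_mem_edges h2'⟩
  obtain ⟨a, ha1, ha2⟩ := hkey e he1 he2
  have hxc1 : s(x, y) ∉ c1.edges := fun h => hy1 (c1.snd_mem_support_of_mem_edges h)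
  have hxc2 : s(x, y) ∉ c2.edges := fun h => hx2 (c2.fst_mem_support_of_mem_edges h)
  -- the family of cycles using exactly one crossing edge, all other edges on c1 or c2
  have hexΦ : ∃ n : ℕ, ∃ (r : V) (Z : G.Walk r r), Z.IsCycle ∧ Z.length = n ∧
      ∃ p q, p ∈ c1.support ∧ p ∉ c2.support ∧ q ∈ c2.support ∧ q ∉ c1.support ∧ G.Adj p q ∧
        s(p, q) ∈ Z.edges ∧ ∀ d ∈ Z.edges, d = s(p, q) ∨ d ∈ c1.edges ∨ d ∈ c2.edges := by
    set W : G.Walk y x :=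
      (((c2.dropUntil y hy2).append (c2.takeUntil a ha2)).append
        ((c1.dropUntil a ha1).append (c1.takeUntil x hx1))) with hW
    have hWe : ∀ d ∈ W.edges, d ∈ c1.edges ∨ d ∈ c2.edges := by
      intro d hd
      rw [hW, Walk.edges_append, List.mem_append, Walk.edges_append, Walk.edges_append,
        List.mem_append, List.mem_append] at hd
      rcases hd with (hd | hd) | (hd | hd)
      · exact Or.inr (c2.edges_dropUntil_subset _ hd)
      · exact Or.inr (c2.edges_takeUntil_subset _ hd)
      · exact Or.inl (c1.edges_dropUntil_subset _ hd)
      · exact Or.inl (c1.edges_takeUntil_subset _ hd)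
    have hQe : ∀ d ∈ W.bypass.edges, d ∈ c1.edges ∨ d ∈ c2.edges :=
      fun d hd => hWe d (W.edges_bypass_subset hd)
    have hxyQ : s(x, y) ∉ W.bypass.edges := by
      intro h
      rcases hQe _ h with h' | h'
      · exact hxc1 h'
      · exact hxc2 h'
    have hZ0 : (Walk.cons hadj W.bypass).IsCycle :=
      (Walk.cons_isCycle_iff W.bypass hadj).mpr ⟨W.bypass_isPath, hxyQ⟩
    refine ⟨(Walk.cons hadj W.bypass).length, x, Walk.cons hadj W.bypass, hZ0, rfl,
      x, y, hx1, hx2, hy2, hy1, hadj, by simp, ?_⟩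
    intro d hd
    rw [Walk.edges_cons, List.mem_cons] at hd
    rcases hd with rfl | hd
    · exact Or.inl rfl
    · exact Or.inr (hQe d hd)
  -- take a minimum-length member
  have hmin := fun m (hm : m < Nat.find hexΦ) => Nat.find_min hexΦ hm
  obtain ⟨r, Z, hZ, hZlen, p, q, hp1, hp2, hq2, hq1, hpq, hgZ, hall⟩ := Nat.find_spec hexΦ
  -- every vertex of Z lies on c1 or c2
  have hloc : ∀ z ∈ Z.support, z ∈ c1.support ∨ z ∈ c2.support := by
    intro z hz
    obtain ⟨d, hd, hzd⟩ := cycle_support_mem_edge_aux Z hZ hz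
    rcases hall d hd with rfl | hd1 | hd2
    · rcases Sym2.mem_iff.mp hzd with rfl | rfl
      · exact Or.inl hp1
      · exact Or.inr hq2
    · exact Or.inl (mem_support_of_mem_edges_aux c1 hd1 hzd)
    · exact Or.inr (mem_support_of_mem_edges_aux c2 hd2 hzd)
  -- the minimum-length member is chordless
  have hchordless : ∀ u v, u ∈ Z.support → v ∈ Z.support → G.Adj u v → s(u, v) ∈ Z.edges := by
    intro u v huZ hvZ huv
    by_contra hcon
    obtain ⟨P, Q, hPp, hQp, hperm, hlen⟩ := cycle_split_aux Z hZ huZ hvZ huv.ne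
    have hPe : ∀ d ∈ P.edges, d ∈ Z.edges := fun d hd =>
      hperm.subset (List.mem_append_left _ hd)
    have hQe : ∀ d ∈ Q.edges, d ∈ Z.edges := fun d hd =>
      hperm.subset (List.mem_append_right _ hd)
    have hnodup : (P.edges ++ Q.edges).Nodup :=
      hperm.nodup_iff.mpr hZ.isCircuit.isTrail.edges_nodup
    have hdisj : ∀ d, d ∈ P.edges → d ∈ Q.edges → False := by
      intro d h1' h2'
      exact List.disjoint_of_nodup_append hnodup h1' h2'
    have hP2 : 2 ≤ P.length := by
      have h0 : P.length ≠ 0 := fun h => huv.ne (Walk.eq_of_length_eq_zero h)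
      have h1' : P.length ≠ 1 := fun h => hcon (hPe _ (edges_of_length_one_aux P h))
      omega
    have hQ2 : 2 ≤ Q.length := by
      have h0 : Q.length ≠ 0 := fun h => huv.ne.symm (Walk.eq_of_length_eq_zero h)
      have h1' : Q.length ≠ 1 := fun h => by
        have hm := hQe _ (edges_of_length_one_aux Q h)
        rw [Sym2.eq_swap] at hm
        exact hcon hm
      omega
    have hKPcyc : (Walk.cons huv.symm P).IsCycle := by
      refine (Walk.cons_isCycle_iff P huv.symm).mpr ⟨hPp, fun h => hcon ?_⟩
      have := hPe _ h
      rwa [Sym2.eq_swap] at this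
    have hKQcyc : (Walk.cons huv Q).IsCycle :=
      (Walk.cons_isCycle_iff Q huv).mpr ⟨hQp, fun h => hcon (hQe _ h)⟩
    have hKPlen : (Walk.cons huv.symm P).length < Nat.find hexΦ := by
      rw [Walk.length_cons]; omega
    have hKQlen : (Walk.cons huv Q).length < Nat.find hexΦ := by
      rw [Walk.length_cons]; omega
    have hgPQ : s(p, q) ∈ P.edges ∨ s(p, q) ∈ Q.edges :=
      List.mem_append.mp (hperm.mem_iff.mpr hgZ)
    have hclass : s(u, v) ∈ c1.edges ∨ s(u, v) ∈ c2.edges ∨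
        (u ∈ c1.support ∧ u ∉ c2.support ∧ v ∈ c2.support ∧ v ∉ c1.support) ∨
        (v ∈ c1.support ∧ v ∉ c2.support ∧ u ∈ c2.support ∧ u ∉ c1.support) := by
      rcases hloc u huZ with hu1 | hu2 <;> rcases hloc v hvZ with hv1 | hv2
      · exact Or.inl (h1.2 u v hu1 hv1 huv)
      · by_cases hu2' : u ∈ c2.support
        · exact Or.inr (Or.inl (h2.2 u v hu2' hv2 huv))
        · by_cases hv1' : v ∈ c1.support
          · exact Or.inl (h1.2 u v hu1 hv1' huv)
          · exact Or.inr (Or.inr (Or.inl ⟨hu1, hu2', hv2, hv1'⟩))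
      · by_cases hv2' : v ∈ c2.support
        · exact Or.inr (Or.inl (h2.2 u v hu2 hv2' huv))
        · by_cases hu1' : u ∈ c1.support
          · exact Or.inl (h1.2 u v hu1' hv1 huv)
          · exact Or.inr (Or.inr (Or.inr ⟨hv1, hv2', hu2, hu1'⟩))
      · exact Or.inr (Or.inl (h2.2 u v hu2 hv2 huv))
    rcases hclass with hc | hc | hc | hc
    · -- chord on c1 : keep the arc containing the crossing edge
      rcases hgPQ with hg | hg
      · refine hmin _ hKPlen ⟨v, Walk.cons huv.symm P, hKPcyc, rfl, p, q,
          hp1, hp2, hq2, hq1, hpq, ?_, ?_⟩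
        · rw [Walk.edges_cons]; exact List.mem_cons_of_mem _ hg
        · intro d hd
          rw [Walk.edges_cons, List.mem_cons] at hd
          rcases hd with rfl | hd
          · refine Or.inr (Or.inl ?_)
            rw [Sym2.eq_swap]; exact hc
          · exact hall d (hPe d hd)
      · refine hmin _ hKQlen ⟨u, Walk.cons huv Q, hKQcyc, rfl, p, q,
          hp1, hp2, hq2, hq1, hpq, ?_, ?_⟩
        · rw [Walk.edges_cons]; exact List.mem_cons_of_mem _ hg
        · intro d hd
          rw [Walk.edges_cons, List.mem_cons] at hd
          rcases hd with rfl | hd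
          · exact Or.inr (Or.inl hc)
          · exact hall d (hQe d hd)
    · -- chord on c2 : same
      rcases hgPQ with hg | hg
      · refine hmin _ hKPlen ⟨v, Walk.cons huv.symm P, hKPcyc, rfl, p, q,
          hp1, hp2, hq2, hq1, hpq, ?_, ?_⟩
        · rw [Walk.edges_cons]; exact List.mem_cons_of_mem _ hg
        · intro d hd
          rw [Walk.edges_cons, List.mem_cons] at hd
          rcases hd with rfl | hd
          · refine Or.inr (Or.inr ?_)
            rw [Sym2.eq_swap]; exact hc
          · exact hall d (hPe d hd)
      · refine hmin _ hKQlen ⟨u, Walk.cons huv Q, hKQcyc, rfl, p, q,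
          hp1, hp2, hq2, hq1, hpq, ?_, ?_⟩
        · rw [Walk.edges_cons]; exact List.mem_cons_of_mem _ hg
        · intro d hd
          rw [Walk.edges_cons, List.mem_cons] at hd
          rcases hd with rfl | hd
          · exact Or.inr (Or.inr hc)
          · exact hall d (hQe d hd)
    · -- the chord is a crossing edge (u on c1 only, v on c2 only):
      -- keep the arc NOT containing the old crossing edge
      obtain ⟨hu1, hu2, hv2, hv1⟩ := hc
      rcases hgPQ with hg | hg
      · refine hmin _ hKQlen ⟨u, Walk.cons huv Q, hKQcyc, rfl, u, v,
          hu1, hu2, hv2, hv1, huv, ?_, ?_⟩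
        · rw [Walk.edges_cons]; exact List.mem_cons_self
        · intro d hd
          rw [Walk.edges_cons, List.mem_cons] at hd
          rcases hd with rfl | hd
          · exact Or.inl rfl
          · rcases hall d (hQe d hd) with rfl | h | h
            · exact absurd hg (fun h' => hdisj _ h' hd)
            · exact Or.inr (Or.inl h)
            · exact Or.inr (Or.inr h)
      · refine hmin _ hKPlen ⟨v, Walk.cons huv.symm P, hKPcyc, rfl, u, v,
          hu1, hu2, hv2, hv1, huv, ?_, ?_⟩
        · rw [Walk.edges_cons]
          exact List.mem_cons.mpr (Or.inl Sym2.eq_swap)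
        · intro d hd
          rw [Walk.edges_cons, List.mem_cons] at hd
          rcases hd with rfl | hd
          · exact Or.inl Sym2.eq_swap
          · rcases hall d (hPe d hd) with rfl | h | h
            · exact absurd hg (fun h' => hdisj _ hd h')
            · exact Or.inr (Or.inl h)
            · exact Or.inr (Or.inr h)
    · -- the chord is a crossing edge (v on c1 only, u on c2 only)
      obtain ⟨hv1, hv2, hu2, hu1⟩ := hc
      rcases hgPQ with hg | hg
      · refine hmin _ hKQlen ⟨u, Walk.cons huv Q, hKQcyc, rfl, v, u,
          hv1, hv2, hu2, hu1, huv.symm, ?_, ?_⟩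
        · rw [Walk.edges_cons]
          exact List.mem_cons.mpr (Or.inl Sym2.eq_swap)
        · intro d hd
          rw [Walk.edges_cons, List.mem_cons] at hd
          rcases hd with rfl | hd
          · exact Or.inl Sym2.eq_swap
          · rcases hall d (hQe d hd) with rfl | h | h
            · exact absurd hg (fun h' => hdisj _ h' hd)
            · exact Or.inr (Or.inl h)
            · exact Or.inr (Or.inr h)
      · refine hmin _ hKPlen ⟨v, Walk.cons huv.symm P, hKPcyc, rfl, v, u,
          hv1, hv2, hu2, hu1, huv.symm, ?_, ?_⟩
        · rw [Walk.edges_cons]; exact List.mem_cons_self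
        · intro d hd
          rw [Walk.edges_cons, List.mem_cons] at hd
          rcases hd with rfl | hd
          · exact Or.inl rfl
          · rcases hall d (hPe d hd) with rfl | h | h
            · exact absurd hg (fun h' => hdisj _ hd h')
            · exact Or.inr (Or.inl h)
            · exact Or.inr (Or.inr h)
  -- Z is a chordless cycle distinct from c1 and c2
  have hZset : {d | d ∈ Z.edges} ∈ chordlessCycleSets G := ⟨r, Z, ⟨hZ, hchordless⟩, rfl⟩
  have h1set : {d | d ∈ c1.edges} ∈ chordlessCycleSets G := ⟨v1, c1, h1, rfl⟩
  have h2set : {d | d ∈ c2.edges} ∈ chordlessCycleSets G := ⟨v2, c2, h2, rfl⟩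
  have hneq1 : {d | d ∈ Z.edges} ≠ {d | d ∈ c1.edges} := by
    intro h
    have hmem : s(p, q) ∈ {d | d ∈ Z.edges} := hgZ
    rw [h] at hmem
    exact hq1 (c1.snd_mem_support_of_mem_edges hmem)
  have hneq2 : {d | d ∈ Z.edges} ≠ {d | d ∈ c2.edges} := by
    intro h
    have hmem : s(p, q) ∈ {d | d ∈ Z.edges} := hgZ
    rw [h] at hmem
    exact hp2 (c2.fst_mem_support_of_mem_edges hmem)
  have hcard1 := hci _ hZset _ h1set hneq1
  have hcard2 := hci _ hZset _ h2set hneq2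
  have hfinZ : ({d | d ∈ Z.edges} : Set (Sym2 V)).Finite := Z.edges.finite_toSet
  -- Z shares at most one edge with each of c1, c2
  have huniq1 : ∀ d d', d ∈ Z.edges → d ∈ c1.edges → d' ∈ Z.edges → d' ∈ c1.edges → d = d' := by
    intro d d' hd hdc hd' hdc'
    by_contra hdd
    have hsub : ({d, d'} : Set (Sym2 V)) ⊆ {x | x ∈ Z.edges} ∩ {x | x ∈ c1.edges} := by
      intro t ht
      simp only [Set.mem_insert_iff, Set.mem_singleton_iff] at ht
      rcases ht with rfl | rfl
      · exact ⟨hd, hdc⟩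
      · exact ⟨hd', hdc'⟩
    have hle := Set.ncard_le_ncard hsub (hfinZ.inter_of_left _)
    rw [Set.ncard_pair hdd] at hle
    omega
  have huniq2 : ∀ d d', d ∈ Z.edges → d ∈ c2.edges → d' ∈ Z.edges → d' ∈ c2.edges → d = d' := by
    intro d d' hd hdc hd' hdc'
    by_contra hdd
    have hsub : ({d, d'} : Set (Sym2 V)) ⊆ {x | x ∈ Z.edges} ∩ {x | x ∈ c2.edges} := by
      intro t ht
      simp only [Set.mem_insert_iff, Set.mem_singleton_iff] at ht
      rcases ht with rfl | rfl
      · exact ⟨hd, hdc⟩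
      · exact ⟨hd', hdc'⟩
    have hle := Set.ncard_le_ncard hsub (hfinZ.inter_of_left _)
    rw [Set.ncard_pair hdd] at hle
    omega
  -- so Z has at most 3 edges, contradicting triangle-freeness
  obtain ⟨d1, hd1⟩ : ∃ d1, ∀ d, d ∈ Z.edges → d ∈ c1.edges → d = d1 := by
    by_cases h : ∃ d, d ∈ Z.edges ∧ d ∈ c1.edges
    · obtain ⟨d0, h0⟩ := h
      exact ⟨d0, fun d hd hdc => huniq1 d d0 hd hdc h0.1 h0.2⟩
    · exact ⟨s(p, q), fun d hd hdc => absurd ⟨d, hd, hdc⟩ h⟩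
  obtain ⟨d2, hd2⟩ : ∃ d2, ∀ d, d ∈ Z.edges → d ∈ c2.edges → d = d2 := by
    by_cases h : ∃ d, d ∈ Z.edges ∧ d ∈ c2.edges
    · obtain ⟨d0, h0⟩ := h
      exact ⟨d0, fun d hd hdc => huniq2 d d0 hd hdc h0.1 h0.2⟩
    · exact ⟨s(p, q), fun d hd hdc => absurd ⟨d, hd, hdc⟩ h⟩
  have hsub3 : Z.edges.toFinset ⊆ {s(p, q), d1, d2} := by
    intro d hd
    rw [List.mem_toFinset] at hd
    rcases hall d hd with h | h | h
    · simp [h]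
    · simp [hd1 d hd h]
    · simp [hd2 d hd h]
  have hcard3 : Z.edges.toFinset.card ≤ 3 := by
    refine le_trans (Finset.card_le_card hsub3) ?_
    refine le_trans (Finset.card_insert_le _ _) ?_
    have h := Finset.card_insert_le d1 ({d2} : Finset (Sym2 V))
    simp only [Finset.card_singleton] at h
    omega
  have hZnodup : Z.edges.Nodup := hZ.isCircuit.isTrail.edges_nodup
  have hlen3 : Z.length ≤ 3 := by
    have h1' := List.toFinset_card_of_nodup hZnodup
    have h2' := Z.length_edges
    omega
  have h4 : 3 ≤ Z.length := hZ.three_le_length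
  exact absurd (by omega : Z.length = 3) (htf r Z hZ)
end

section
/- Let G be a triangle-free graph in which any two chordless cycles share at most one edge. If an edge e of G lies on exactly one chordless cycle, then e is not a chord of any cycle of G. -/
open SimpleGraph
variable {V : Type*}

section Aux

variable {G : SimpleGraph V} [DecidableEq V]

private lemma length_rotate_aux {v u : V} (c : G.Walk v v) (h : u ∈ c.support) :
    (c.rotate _ h).length = c.length := by
  have h1 := (c.rotate_edges _ h).perm.length_eq
  rwa [SimpleGraph.Walk.length_edges, SimpleGraph.Walk.length_edges] at h1

/-- For a nonnil closed walk, support membership is equivalent to tail support membership. -/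
private lemma mem_support_iff_mem_tail {v z : V} {c : G.Walk v v} (hc : ¬c.Nil) :
    z ∈ c.support ↔ z ∈ c.support.tail := by
  constructor
  · intro hz
    rw [SimpleGraph.Walk.support_eq_cons] at hz
    rcases List.mem_cons.mp hz with rfl | h
    · have hlen : c.length ≠ 0 := fun h0 => hc (SimpleGraph.Walk.nil_iff_length_eq.mpr h0)
      have hne : c.support.tail ≠ [] := by
        have h1 := c.length_support
        intro h0
        have h2 : c.support.tail.length = 0 := by rw [h0]; rfl
        have h3 : c.support.tail.length = c.support.length - 1 := List.length_tail
        omega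
      have hmem := List.getLast_mem hne
      simp only [List.getLast_tail, SimpleGraph.Walk.getLast_support] at hmem
      exact hmem
    · exact h
  · intro h
    rw [SimpleGraph.Walk.support_eq_cons]
    exact List.mem_cons_of_mem _ h

private lemma mem_support_rotate_iff {v u z : V} {c : G.Walk v v} (hc : ¬c.Nil)
    (h : u ∈ c.support) : z ∈ (c.rotate _ h).support ↔ z ∈ c.support := by
  have hrot : ¬(c.rotate _ h).Nil := by
    rw [SimpleGraph.Walk.nil_iff_length_eq, length_rotate_aux]
    exact fun h0 => hc (SimpleGraph.Walk.nil_iff_length_eq.mpr h0)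
  rw [mem_support_iff_mem_tail hrot, mem_support_iff_mem_tail hc,
    (c.support_rotate _ h).mem_iff]

/-- Walks of length 1 consist of exactly the edge between the endpoints. -/
private lemma mem_edges_of_length_one {u w : V} {p : G.Walk u w} (h : p.length = 1) :
    s(u, w) ∈ p.edges := by
  cases p with
  | nil => simp at h
  | cons ha q =>
    cases q with
    | nil => simp
    | cons hb r => simp [SimpleGraph.Walk.length_cons] at h

/-- Every support vertex of a nonnil walk lies on some edge of the walk. -/
private lemma exists_edge_of_mem_support {u w z : V} (p : G.Walk u w) (hp : ¬p.Nil)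
    (hz : z ∈ p.support) : ∃ f ∈ p.edges, z ∈ f := by
  induction p with
  | nil => exact absurd SimpleGraph.Walk.Nil.nil hp
  | @cons a b c ha q ih =>
    rcases List.mem_cons.mp hz with rfl | hz'
    · exact ⟨s(z, b), by simp, by simp⟩
    by_cases hq : q.Nil
    · have hbc : b = c := hq.eq
      subst hbc
      have hzb : z = b := by
        have := hq.eq_nil
        rw [this] at hz'
        simpa using hz'
      exact ⟨s(a, b), by simp, by simp [hzb]⟩
    · obtain ⟨f, hf, hzf⟩ := ih hq hz'
      exact ⟨f, by simp [hf], hzf⟩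

/-- Splitting a cycle at a vertex distinct from the base point yields two internally
disjoint paths. -/
private lemma split_cycle_paths {x y : V} (c : G.Walk x x) (hc : c.IsCycle)
    (hy : y ∈ c.support) (hyx : y ≠ x) :
    (c.takeUntil y hy).IsPath ∧ (c.dropUntil y hy).IsPath ∧
      ∀ z, z ∈ (c.takeUntil y hy).support → z ∈ (c.dropUntil y hy).support →
        z = x ∨ z = y := by
  set P1 := c.takeUntil y hy with hP1
  set P2 := c.dropUntil y hy with hP2
  have hspec : P1.append P2 = c := c.take_spec hy
  have hsup : c.support = P1.support ++ P2.support.tail := by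
    rw [← hspec, SimpleGraph.Walk.support_append]
  have hP1cons : P1.support = x :: P1.support.tail := P1.support_eq_cons
  have htails : c.support.tail = P1.support.tail ++ P2.support.tail := by
    conv_lhs => rw [hsup, hP1cons]
    simp
  have hnd : (P1.support.tail ++ P2.support.tail).Nodup := by
    rw [← htails]; exact hc.support_nodup
  rw [List.nodup_append'] at hnd
  have hy1 : y ∈ P1.support.tail :=
    SimpleGraph.Walk.end_mem_tail_support_of_ne (Ne.symm hyx) P1
  have hx2 : x ∈ P2.support.tail :=
    SimpleGraph.Walk.end_mem_tail_support_of_ne hyx P2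
  refine ⟨?_, ?_, ?_⟩
  · rw [SimpleGraph.Walk.isPath_def, hP1cons, List.nodup_cons]
    exact ⟨fun hx1 => hnd.2.2 hx1 hx2, hnd.1⟩
  · rw [SimpleGraph.Walk.isPath_def, P2.support_eq_cons, List.nodup_cons]
    exact ⟨fun hy2 => hnd.2.2 hy1 hy2, hnd.2.1⟩
  · intro z hz1 hz2
    rw [hP1cons] at hz1
    rw [P2.support_eq_cons] at hz2
    rcases List.mem_cons.mp hz1 with rfl | hz1'
    · exact Or.inl rfl
    rcases List.mem_cons.mp hz2 with rfl | hz2'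
    · exact Or.inr rfl
    · exact absurd hz2' (hnd.2.2 hz1')

/-- Every cycle through an edge `e` contains a chordless cycle through `e` supported on
a subset of its vertices. -/
private lemma exists_chordless_subcycle :
    ∀ (n : ℕ) {v : V} (c : G.Walk v v), c.length ≤ n → c.IsCycle → ∀ e ∈ c.edges,
      ∃ (w : V) (d : G.Walk w w), IsChordlessCycle d ∧ e ∈ d.edges ∧
        ∀ z ∈ d.support, z ∈ c.support := by
  intro n
  induction n with
  | zero =>
    intro v c hl hc e he
    have := hc.three_le_length
    omega
  | succ n ih =>
    intro v c hl hc e he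
    by_cases hch : ∀ a b, a ∈ c.support → b ∈ c.support → G.Adj a b → s(a, b) ∈ c.edges
    · exact ⟨v, c, ⟨hc, hch⟩, he, fun z hz => hz⟩
    push_neg at hch
    obtain ⟨a, b, ha, hb, hadj, hne⟩ := hch
    have hab : a ≠ b := hadj.ne
    have hcnil : ¬c.Nil := hc.not_nil
    set c' := c.rotate _ ha with hc'def
    have hc'cyc : c'.IsCycle := hc.rotate ha
    have hb' : b ∈ c'.support := (mem_support_rotate_iff hcnil ha).mpr hb
    have hedges : ∀ f, f ∈ c'.edges ↔ f ∈ c.edges := fun f => (c.rotate_edges _ ha).mem_iff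
    have hsupp : ∀ z, z ∈ c'.support ↔ z ∈ c.support :=
      fun z => mem_support_rotate_iff hcnil ha
    have hlen : c'.length = c.length := length_rotate_aux c ha
    set P1 := c'.takeUntil b hb' with hP1def
    set P2 := c'.dropUntil b hb' with hP2def
    obtain ⟨hp1, hp2, _⟩ := split_cycle_paths c' hc'cyc hb' (Ne.symm hab)
    have hspec : P1.append P2 = c' := c'.take_spec hb'
    have hlensum : P1.length + P2.length = c'.length := by
      rw [← hspec, SimpleGraph.Walk.length_append]
    have hne' : s(a, b) ∉ c'.edges := fun h => hne ((hedges _).mp h)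
    have hP1two : 2 ≤ P1.length := by
      rcases Nat.lt_or_ge P1.length 2 with h2 | h2
      · interval_cases h : P1.length
        · exact absurd (SimpleGraph.Walk.eq_of_length_eq_zero h) hab
        · exact absurd (c'.edges_takeUntil_subset hb' (mem_edges_of_length_one h)) hne'
      · exact h2
    have hP2two : 2 ≤ P2.length := by
      rcases Nat.lt_or_ge P2.length 2 with h2 | h2
      · interval_cases h : P2.length
        · exact absurd (SimpleGraph.Walk.eq_of_length_eq_zero h) (Ne.symm hab)
        · refine absurd (c'.edges_dropUntil_subset hb' (mem_edges_of_length_one h)) ?_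
          rw [Sym2.eq_swap]
          exact hne'
      · exact h2
    have heC : e ∈ P1.edges ∨ e ∈ P2.edges := by
      have : e ∈ c'.edges := (hedges e).mpr he
      rw [← hspec, SimpleGraph.Walk.edges_append, List.mem_append] at this
      exact this
    rcases heC with heP | heP
    · -- use the cycle cons hadj.symm P1 : Walk b b
      set C1 : G.Walk b b := SimpleGraph.Walk.cons hadj.symm P1 with hC1def
      have hC1cyc : C1.IsCycle := by
        rw [hC1def, SimpleGraph.Walk.cons_isCycle_iff]
        refine ⟨hp1, fun h => hne' ?_⟩
        rw [Sym2.eq_swap] at h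
        exact c'.edges_takeUntil_subset hb' h
      have hC1len : C1.length ≤ n := by
        have : C1.length = P1.length + 1 := by rw [hC1def]; rfl
        omega
      obtain ⟨w, d, hd, hed, hdsub⟩ := ih C1 hC1len hC1cyc e (by
        rw [hC1def, SimpleGraph.Walk.edges_cons]
        exact List.mem_cons_of_mem _ heP)
      refine ⟨w, d, hd, hed, fun z hz => ?_⟩
      have hz' := hdsub z hz
      rw [hC1def, SimpleGraph.Walk.support_cons] at hz'
      rcases List.mem_cons.mp hz' with rfl | hz''
      · exact hb
      · exact (hsupp z).mp (c'.support_takeUntil_subset hb' hz'')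
    · -- use the cycle cons hadj P2 : Walk a a
      set C2 : G.Walk a a := SimpleGraph.Walk.cons hadj P2 with hC2def
      have hC2cyc : C2.IsCycle := by
        rw [hC2def, SimpleGraph.Walk.cons_isCycle_iff]
        exact ⟨hp2, fun h => hne' (c'.edges_dropUntil_subset hb' h)⟩
      have hC2len : C2.length ≤ n := by
        have : C2.length = P2.length + 1 := by rw [hC2def]; rfl
        omega
      obtain ⟨w, d, hd, hed, hdsub⟩ := ih C2 hC2len hC2cyc e (by
        rw [hC2def, SimpleGraph.Walk.edges_cons]
        exact List.mem_cons_of_mem _ heP)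
      refine ⟨w, d, hd, hed, fun z hz => ?_⟩
      have hz' := hdsub z hz
      rw [hC2def, SimpleGraph.Walk.support_cons] at hz'
      rcases List.mem_cons.mp hz' with rfl | hz''
      · exact ha
      · exact (hsupp z).mp (c'.support_dropUntil_subset hb' hz'')

end Aux

/-- In a triangle-free graph in which any two chordless cycles share at most one edge,
an edge lying on exactly one chordless cycle is not a chord of any cycle: whenever both
endpoints of such an edge lie on a cycle, the edge is an edge of that cycle. -/
theorem edge_on_unique_chordless_cycle_not_chord [Fintype V] {G : SimpleGraph V}
    (htf : TriangleFree G) (hci : ChordlessCyclesShareAtMostOneEdge G)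
    (e : Sym2 V) (he : e ∈ G.edgeSet)
    (huniq : {S ∈ chordlessCycleSets G | e ∈ S}.ncard = 1) :
    ∀ (v : V) (c : G.Walk v v), c.IsCycle →
      ∀ x y, e = s(x, y) → x ∈ c.support → y ∈ c.support → e ∈ c.edges := by
  classical
  intro v c hc x y hexy hx hy
  by_cases hec : e ∈ c.edges
  · exact hec
  exfalso
  subst hexy
  rw [SimpleGraph.mem_edgeSet] at he
  have hxy : x ≠ y := he.ne
  set c' := c.rotate _ hx with hc'def
  have hc'cyc : c'.IsCycle := hc.rotate hx
  have hy' : y ∈ c'.support := (mem_support_rotate_iff hc.not_nil hx).mpr hy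
  set P1 := c'.takeUntil y hy' with hP1def
  set P2 := c'.dropUntil y hy' with hP2def
  obtain ⟨hp1, hp2, hdisj⟩ := split_cycle_paths c' hc'cyc hy' (Ne.symm hxy)
  have hne' : s(x, y) ∉ c'.edges := fun h => hec ((c.rotate_edges _ hx).mem_iff.mp h)
  -- the two cycles through the chord
  set C1 : G.Walk y y := SimpleGraph.Walk.cons he.symm P1 with hC1def
  set C2 : G.Walk x x := SimpleGraph.Walk.cons he P2 with hC2def
  have hC1cyc : C1.IsCycle := by
    rw [hC1def, SimpleGraph.Walk.cons_isCycle_iff]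
    refine ⟨hp1, fun h => hne' ?_⟩
    rw [Sym2.eq_swap] at h
    exact c'.edges_takeUntil_subset hy' h
  have hC2cyc : C2.IsCycle := by
    rw [hC2def, SimpleGraph.Walk.cons_isCycle_iff]
    exact ⟨hp2, fun h => hne' (c'.edges_dropUntil_subset hy' h)⟩
  have heC1 : s(x, y) ∈ C1.edges := by
    rw [hC1def, SimpleGraph.Walk.edges_cons, Sym2.eq_swap]
    exact List.mem_cons_self
  have heC2 : s(x, y) ∈ C2.edges := by
    rw [hC2def, SimpleGraph.Walk.edges_cons]
    exact List.mem_cons_self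
  obtain ⟨w1, d1, hd1, hed1, hd1sub⟩ :=
    exists_chordless_subcycle C1.length C1 le_rfl hC1cyc _ heC1
  obtain ⟨w2, d2, hd2, hed2, hd2sub⟩ :=
    exists_chordless_subcycle C2.length C2 le_rfl hC2cyc _ heC2
  -- the two chordless cycles have the same edge set, by uniqueness
  have hS1 : {f | f ∈ d1.edges} ∈ {S ∈ chordlessCycleSets G | s(x, y) ∈ S} :=
    ⟨⟨w1, d1, hd1, rfl⟩, hed1⟩
  have hS2 : {f | f ∈ d2.edges} ∈ {S ∈ chordlessCycleSets G | s(x, y) ∈ S} :=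
    ⟨⟨w2, d2, hd2, rfl⟩, hed2⟩
  obtain ⟨S0, hS0⟩ := Set.ncard_eq_one.mp huniq
  rw [hS0] at hS1 hS2
  have hSeq : {f | f ∈ d1.edges} = {f | f ∈ d2.edges} := by
    rw [Set.mem_singleton_iff.mp hS1, Set.mem_singleton_iff.mp hS2]
  -- hence same supports
  have hsupsub : ∀ z ∈ d1.support, z ∈ d2.support := by
    intro z hz
    obtain ⟨f, hf, hzf⟩ := exists_edge_of_mem_support d1 hd1.1.not_nil hz
    have hf2 : f ∈ d2.edges := by
      have : f ∈ {f | f ∈ d1.edges} := hf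
      rw [hSeq] at this
      exact this
    induction f with
    | h p q =>
      rcases Sym2.mem_iff.mp hzf with rfl | rfl
      · exact d2.fst_mem_support_of_mem_edges hf2
      · exact d2.snd_mem_support_of_mem_edges hf2
  -- support of d1 lies in both P1 and P2, hence in {x, y}
  have hinxy : ∀ z ∈ d1.support, z = x ∨ z = y := by
    intro z hz
    have hz1 : z ∈ P1.support := by
      have := hd1sub z hz
      rw [hC1def, SimpleGraph.Walk.support_cons] at this
      rcases List.mem_cons.mp this with rfl | h
      · exact P1.end_mem_support
      · exact h
    have hz2 : z ∈ P2.support := by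
      have := hd2sub z (hsupsub z hz)
      rw [hC2def, SimpleGraph.Walk.support_cons] at this
      rcases List.mem_cons.mp this with rfl | h
      · exact P2.end_mem_support
      · exact h
    exact hdisj z hz1 hz2
  -- but d1 has at least three distinct vertices
  have hnodup : d1.support.tail.Nodup := hd1.1.support_nodup
  have hlen3 : 3 ≤ d1.support.tail.length := by
    have h1 := d1.length_support
    have h2 : d1.support.tail.length = d1.support.length - 1 := List.length_tail
    have h3 := hd1.1.three_le_length
    omega
  have hsubfin : d1.support.tail.toFinset ⊆ ({x, y} : Finset V) := by
    intro z hz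
    rw [List.mem_toFinset] at hz
    have : z ∈ d1.support := by
      rw [d1.support_eq_cons]
      exact List.mem_cons_of_mem _ hz
    rcases hinxy z this with rfl | rfl <;> simp
  have hcard : d1.support.tail.toFinset.card = d1.support.tail.length :=
    List.toFinset_card_of_nodup hnodup
  have hle := Finset.card_le_card hsubfin
  have : ({x, y} : Finset V).card ≤ 2 := Finset.card_insert_le _ _ |>.trans (by simp)
  omega
end

section
/- For any connected finite simple graph G, the number of chordless cycles of G is at least e(G) − v(G) + 1. -/
open SimpleGraph
variable {V : Type*}

section Aux

open SimpleGraph Walk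

variable {G : SimpleGraph V}

open Classical in
/-- Indicator vector of a set of edges, over `ZMod 2`. -/
noncomputable def setVec (S : Set (Sym2 V)) : Sym2 V → ZMod 2 :=
  fun e => if e ∈ S then 1 else 0

/-- The span of the indicator vectors of chordless cycles. -/
noncomputable def chordSpan (G : SimpleGraph V) : Submodule (ZMod 2) (Sym2 V → ZMod 2) :=
  Submodule.span (ZMod 2) (setVec '' chordlessCycleSets G)

lemma edges_of_length_one : ∀ {u v : V} {p : G.Walk u v}, p.length = 1 → p.edges = [s(u, v)] := by
  intro u v p hl
  cases p with
  | nil => simp at hl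
  | cons h q =>
    cases q with
    | nil => rfl
    | cons h' q' => simp [Walk.length_cons] at hl

lemma mem_tail_support_of_closed {v : V} {c : G.Walk v v} (hnil : c ≠ Walk.nil) {u : V}
    (hu : u ∈ c.support) : u ∈ c.support.tail := by
  cases c with
  | nil => exact absurd rfl hnil
  | cons h q =>
    rw [Walk.support_cons, List.tail_cons]
    rw [Walk.support_cons, List.mem_cons] at hu
    rcases hu with rfl | hu
    · exact q.end_mem_support
    · exact hu

/-- Splitting a cycle along a chord incident to its basepoint. -/
lemma cycle_chord_split [DecidableEq V] {x : V} {d : G.Walk x x} (hd : d.IsCycle)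
    {y : V} (hy : y ∈ d.support) (hxy : G.Adj x y) (hch : s(x, y) ∉ d.edges) :
    ∃ C₁ C₂ : G.Walk x x, C₁.IsCycle ∧ C₂.IsCycle ∧ C₁.length < d.length ∧
      C₂.length < d.length ∧
      ∀ e, setVec {e' | e' ∈ d.edges} e
        = setVec {e' | e' ∈ C₁.edges} e + setVec {e' | e' ∈ C₂.edges} e := by
  have hxyne : x ≠ y := hxy.ne
  set P := d.takeUntil y hy with hP
  set Q := d.dropUntil y hy with hQ
  have hspec : P.append Q = d := d.take_spec hy
  have hsupp : d.support.tail = P.support.tail ++ Q.support.tail := by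
    conv_lhs => rw [← hspec]
    rw [Walk.tail_support_append]
  have hnd : (P.support.tail ++ Q.support.tail).Nodup := hsupp ▸ hd.support_nodup
  obtain ⟨hndP, hndQ, hdisj⟩ := List.nodup_append'.mp hnd
  have hyP : y ∈ P.support.tail := Walk.end_mem_tail_support_of_ne hxyne P
  have hxQ : x ∈ Q.support.tail := Walk.end_mem_tail_support_of_ne hxyne.symm Q
  have hPpath : P.IsPath := by
    rw [Walk.isPath_def, Walk.support_eq_cons]
    exact List.nodup_cons.mpr ⟨fun hxP => hdisj hxP hxQ, hndP⟩
  have hQpath : Q.IsPath := by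
    rw [Walk.isPath_def, Walk.support_eq_cons]
    exact List.nodup_cons.mpr ⟨fun hyQ => hdisj hyP hyQ, hndQ⟩
  have hed : d.edges = P.edges ++ Q.edges := by
    conv_lhs => rw [← hspec]
    rw [Walk.edges_append]
  have hend : (P.edges ++ Q.edges).Nodup := hed ▸ hd.isTrail.edges_nodup
  have hedisj : P.edges.Disjoint Q.edges := (List.nodup_append'.mp hend).2.2
  have hchP : s(x, y) ∉ P.edges := fun h => hch (hed ▸ List.mem_append_left _ h)
  have hchQ : s(x, y) ∉ Q.edges := fun h => hch (hed ▸ List.mem_append_right _ h)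
  have hlend : d.length = P.length + Q.length := by
    conv_lhs => rw [← hspec]
    rw [Walk.length_append]
  have hP2 : 2 ≤ P.length := by
    rcases Nat.lt_or_ge P.length 2 with h | h
    · interval_cases h' : P.length
      · exact absurd (Walk.eq_of_length_eq_zero h') hxyne
      · exact absurd (edges_of_length_one h' ▸ List.mem_singleton_self _) hchP
    · exact h
  have hQ2 : 2 ≤ Q.length := by
    rcases Nat.lt_or_ge Q.length 2 with h | h
    · interval_cases h' : Q.length
      · exact absurd (Walk.eq_of_length_eq_zero h').symm hxyne
      · refine absurd ?_ hchQ
        rw [edges_of_length_one h']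
        simp [Sym2.eq_swap]
    · exact h
  refine ⟨Walk.cons hxy P.reverse, Walk.cons hxy Q, ?_, ?_, ?_, ?_, ?_⟩
  · rw [Walk.cons_isCycle_iff]
    refine ⟨hPpath.reverse, ?_⟩
    rw [Walk.edges_reverse, List.mem_reverse]
    exact hchP
  · rw [Walk.cons_isCycle_iff]
    exact ⟨hQpath, hchQ⟩
  · simp only [Walk.length_cons, Walk.length_reverse]
    omega
  · simp only [Walk.length_cons]
    omega
  · intro e
    have hC1 : (Walk.cons hxy P.reverse).edges = s(x, y) :: P.reverse.edges := Walk.edges_cons _ _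
    have hC2 : (Walk.cons hxy Q).edges = s(x, y) :: Q.edges := Walk.edges_cons _ _
    by_cases h1 : e = s(x, y)
    · have m1 : e ∈ (Walk.cons hxy P.reverse).edges := by
        rw [hC1, h1]; exact List.mem_cons_self
      have m2 : e ∈ (Walk.cons hxy Q).edges := by
        rw [hC2, h1]; exact List.mem_cons_self
      have hnd : e ∉ d.edges := by rw [h1]; exact hch
      simp only [setVec, Set.mem_setOf_eq]
      rw [if_neg hnd, if_pos m1, if_pos m2]
      decide
    · have e1 : e ∈ (Walk.cons hxy P.reverse).edges ↔ e ∈ P.edges := by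
        rw [hC1, List.mem_cons, Walk.edges_reverse, List.mem_reverse]
        simp [h1]
      have e2 : e ∈ (Walk.cons hxy Q).edges ↔ e ∈ Q.edges := by
        rw [hC2, List.mem_cons]
        simp [h1]
      simp only [setVec, Set.mem_setOf_eq]
      by_cases h2 : e ∈ P.edges
      · have h3 : e ∉ Q.edges := fun h => hedisj h2 h
        rw [if_pos (hed ▸ List.mem_append_left _ h2), if_pos (e1.mpr h2),
          if_neg (fun h => h3 (e2.mp h))]
        ring
      · by_cases h3 : e ∈ Q.edges
        · rw [if_pos (hed ▸ List.mem_append_right _ h3), if_neg (fun h => h2 (e1.mp h)),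
            if_pos (e2.mpr h3)]
          ring
        · rw [if_neg (fun h => by rcases List.mem_append.mp (hed ▸ h) with h | h <;> tauto),
            if_neg (fun h => h2 (e1.mp h)), if_neg (fun h => h3 (e2.mp h))]
          ring

lemma cycle_vec_mem_span [DecidableEq V] :
    ∀ (n : ℕ) {v : V} (c : G.Walk v v), c.IsCycle → c.length ≤ n →
      setVec {e | e ∈ c.edges} ∈ chordSpan G := by
  intro n
  induction n with
  | zero =>
    intro v c hc hl
    have := hc.three_le_length
    omega
  | succ n ih =>
    intro v c hc hl
    by_cases hcc : IsChordlessCycle c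
    · exact Submodule.subset_span ⟨_, ⟨v, c, hcc, rfl⟩, rfl⟩
    · unfold IsChordlessCycle at hcc
      push_neg at hcc
      obtain ⟨x, y, hx, hy, hadj, hch⟩ := hcc hc
      set d := c.rotate x hx with hdd
      have hdC : d.IsCycle := hc.rotate hx
      have hrot := Walk.rotate_edges c x hx
      have hcnil : c ≠ Walk.nil := hc.ne_nil
      have hyd : y ∈ d.support := by
        have h1 : y ∈ c.support.tail := mem_tail_support_of_closed hcnil hy
        have h2 : y ∈ d.support.tail := ((Walk.support_rotate c x hx).perm.mem_iff).mpr h1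
        rw [Walk.support_eq_cons]
        exact List.mem_cons_of_mem _ h2
      have hchd : s(x, y) ∉ d.edges := fun h => hch (hrot.perm.mem_iff.mp h)
      have hlen : d.length = c.length := by
        rw [← Walk.length_edges, ← Walk.length_edges]
        exact hrot.perm.length_eq
      obtain ⟨C₁, C₂, hC₁, hC₂, hl₁, hl₂, hsum⟩ := cycle_chord_split hdC hyd hadj hchd
      have hde : setVec {e | e ∈ c.edges} = setVec {e | e ∈ d.edges} := by
        funext e
        by_cases h : e ∈ c.edges
        · simp only [setVec, Set.mem_setOf_eq]
          rw [if_pos h, if_pos (hrot.perm.mem_iff.mpr h)]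
        · simp only [setVec, Set.mem_setOf_eq]
          rw [if_neg h, if_neg (fun hm => h (hrot.perm.mem_iff.mp hm))]
      rw [hde]
      have : setVec {e | e ∈ d.edges}
          = setVec {e | e ∈ C₁.edges} + setVec {e | e ∈ C₂.edges} := funext hsum
      rw [this]
      exact Submodule.add_mem _ (ih C₁ hC₁ (by omega)) (ih C₂ hC₂ (by omega))

lemma reachable_delete_of_walk {x y : V}
    (h : (G \ fromEdgeSet {s(x, y)}).Reachable x y) :
    ∀ {a b : V}, G.Walk a b → (G \ fromEdgeSet {s(x, y)}).Reachable a b := by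
  intro a b p
  induction p with
  | nil => exact Reachable.refl _
  | @cons u w b hac q ih =>
    refine Reachable.trans ?_ ih
    by_cases he : s(u, w) = s(x, y)
    · rw [Sym2.eq_iff] at he
      rcases he with ⟨rfl, rfl⟩ | ⟨rfl, rfl⟩
      · exact h
      · exact h.symm
    · refine Adj.reachable ?_
      simp only [sdiff_adj, fromEdgeSet_adj, Set.mem_singleton_iff]
      exact ⟨hac, fun hf => he hf.1⟩

lemma exists_spanning_tree [Fintype V] [DecidableEq V] :
    ∀ (n : ℕ) (G : SimpleGraph V), G.edgeSet.ncard ≤ n → G.Connected →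
      ∃ T, T ≤ G ∧ T.IsTree := by
  intro n
  induction n with
  | zero =>
    intro G hn hconn
    refine ⟨G, le_rfl, hconn, fun v c hc => ?_⟩
    have h3 := hc.three_le_length
    have hne : c.edges ≠ [] := by
      intro h
      have := c.length_edges
      rw [h] at this
      simp at this
      omega
    obtain ⟨e, he⟩ := List.exists_mem_of_ne_nil _ hne
    have hpos : 0 < G.edgeSet.ncard :=
      (Set.ncard_pos (Set.toFinite _)).mpr ⟨e, c.edges_subset_edgeSet he⟩
    omega
  | succ n ih =>
    intro G hn hconn
    by_cases hac : G.IsAcyclic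
    · exact ⟨G, le_rfl, hconn, hac⟩
    · rw [SimpleGraph.IsAcyclic] at hac
      push_neg at hac
      obtain ⟨v, c, hc⟩ := hac
      have hne : c.darts ≠ [] := by
        intro h
        have h1 := c.length_darts
        have h3 := hc.three_le_length
        rw [h] at h1
        simp at h1
        omega
      obtain ⟨d0, hd0⟩ := List.exists_mem_of_ne_nil _ hne
      have hxy : G.Adj d0.fst d0.snd := d0.adj
      have he : s(d0.fst, d0.snd) ∈ c.edges := by
        have : d0.edge ∈ c.edges := List.mem_map_of_mem hd0
        exact this
      have hreach : (G \ fromEdgeSet {s(d0.fst, d0.snd)}).Reachable d0.fst d0.snd :=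
        (adj_and_reachable_delete_edges_iff_exists_cycle.mpr ⟨v, c, hc, he⟩).2
      have hconn' : (G \ fromEdgeSet {s(d0.fst, d0.snd)}).Connected := by
        rw [connected_iff]
        exact ⟨fun a b => reachable_delete_of_walk hreach (hconn.preconnected a b).some,
          hconn.nonempty⟩
      have hsub : (G \ fromEdgeSet {s(d0.fst, d0.snd)}).edgeSet
          = G.edgeSet \ {s(d0.fst, d0.snd)} := by
        rw [edgeSet_sdiff, edgeSet_fromEdgeSet]
        ext e
        simp only [Set.mem_diff, Set.mem_singleton_iff, Set.mem_setOf_eq, not_and, not_not]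
        constructor
        · rintro ⟨h1, h2⟩
          refine ⟨h1, fun hh => ?_⟩
          exact G.not_isDiag_of_mem_edgeSet h1 (h2 hh)
        · rintro ⟨h1, h2⟩
          exact ⟨h1, fun hh => absurd hh h2⟩
      have hcard : (G \ fromEdgeSet {s(d0.fst, d0.snd)}).edgeSet.ncard ≤ n := by
        rw [hsub, Set.ncard_diff_singleton_of_mem (c.edges_subset_edgeSet he)]
        have hpos : 0 < G.edgeSet.ncard :=
          (Set.ncard_pos (Set.toFinite _)).mpr ⟨_, c.edges_subset_edgeSet he⟩
        omega
      obtain ⟨T, h1, h2⟩ := ih _ hcard hconn'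
      exact ⟨T, h1.trans sdiff_le, h2⟩

lemma fund_cycle_vec [DecidableEq V] {T : SimpleGraph V} (hT : T.IsTree) (hle : T ≤ G) :
    ∀ (f : Sym2 V), f ∈ G.edgeSet \ T.edgeSet →
      ∃ w ∈ chordSpan G, w f = 1 ∧ ∀ g, g ∉ T.edgeSet → g ≠ f → w g = 0 := by
  intro f
  induction f using Sym2.ind with
  | _ x y =>
    intro hf
    have hadj : G.Adj x y := hf.1
    have hreach : T.Reachable x y := hT.isConnected.preconnected x y
    set p : T.Path x y := hreach.some.toPath with hp
    have hsubG : ∀ e ∈ (p : T.Walk x y).edges, e ∈ G.edgeSet :=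
      fun e he => edgeSet_mono hle ((p : T.Walk x y).edges_subset_edgeSet he)
    set q : G.Walk x y := (p : T.Walk x y).transfer G hsubG with hq
    have hqe : q.edges = (p : T.Walk x y).edges := Walk.edges_transfer _ _
    have hqpath : q.IsPath := p.2.transfer _
    have hqT : ∀ e ∈ q.edges, e ∈ T.edgeSet := by
      rw [hqe]
      exact fun e he => (p : T.Walk x y).edges_subset_edgeSet he
    have hnotin : s(y, x) ∉ q.edges := by
      intro h
      rw [Sym2.eq_swap] at h
      exact hf.2 (hqT _ h)
    set C : G.Walk y y := Walk.cons hadj.symm q with hC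
    have hCcyc : C.IsCycle := (Walk.cons_isCycle_iff q hadj.symm).mpr ⟨hqpath, hnotin⟩
    refine ⟨setVec {e | e ∈ C.edges}, cycle_vec_mem_span C.length C hCcyc le_rfl, ?_, ?_⟩
    · have : s(x, y) ∈ C.edges := by
        rw [hC, Walk.edges_cons, Sym2.eq_swap]
        exact List.mem_cons_self
      simp only [setVec, Set.mem_setOf_eq]
      rw [if_pos this]
    · intro g hgT hgf
      have : g ∉ C.edges := by
        rw [hC, Walk.edges_cons]
        intro h
        rcases List.mem_cons.mp h with h | h
        · exact hgf (h.trans (Sym2.eq_swap))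
        · exact hgT (hqT _ h)
      simp only [setVec, Set.mem_setOf_eq]
      rw [if_neg this]

end Aux

/-- Any connected finite graph has at least `e(G) - v(G) + 1` chordless cycles. -/
theorem card_chordless_cycles_ge [Fintype V] {G : SimpleGraph V}
    (hconn : G.Connected) :
    (G.edgeSet.ncard : ℤ) - (Nat.card V : ℤ) + 1 ≤ ((chordlessCycleSets G).ncard : ℤ) := by
  classical
  obtain ⟨T, hle, hT⟩ := exists_spanning_tree G.edgeSet.ncard G le_rfl hconn
  set K := (G.edgeSet \ T.edgeSet : Set (Sym2 V)) with hK
  choose w hw hw1 hw0 using fun (f : K) => fund_cycle_vec hT hle f.1 f.2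
  haveI : Fintype K := (Set.toFinite K).fintype
  have hli : LinearIndependent (ZMod 2)
      (fun f : K => (⟨w f, hw f⟩ : chordSpan G)) := by
    set L : chordSpan G →ₗ[ZMod 2] (K → ZMod 2) :=
      (LinearMap.funLeft (ZMod 2) (ZMod 2) (Subtype.val : K → Sym2 V)).comp
        (chordSpan G).subtype with hL
    apply LinearIndependent.of_comp L
    have heq : (L ∘ fun f : K => (⟨w f, hw f⟩ : chordSpan G))
        = fun f : K => Pi.single f (1 : ZMod 2) := by
      funext f g
      simp only [Function.comp_apply, hL, LinearMap.comp_apply, Submodule.subtype_apply,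
        LinearMap.funLeft_apply]
      rcases eq_or_ne g f with rfl | hgf
      · rw [Pi.single_eq_same]
        exact hw1 g
      · rw [Pi.single_eq_of_ne hgf]
        exact hw0 f g.1 g.2.2 (fun h => hgf (Subtype.ext h))
    rw [heq]
    have hb : (fun f : K => Pi.single f (1 : ZMod 2)) = ⇑(Pi.basisFun (ZMod 2) K) := by
      funext i
      rw [Pi.basisFun_apply]
    rw [hb]
    exact (Pi.basisFun (ZMod 2) K).linearIndependent
  have h1 : Fintype.card K ≤ Module.finrank (ZMod 2) (chordSpan G) :=
    hli.fintype_card_le_finrank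
  have h2 : Module.finrank (ZMod 2) (chordSpan G) ≤ (chordlessCycleSets G).ncard := by
    haveI : Fintype (setVec '' chordlessCycleSets G) := (Set.toFinite _).fintype
    calc Module.finrank (ZMod 2) (chordSpan G)
        ≤ (setVec '' chordlessCycleSets G).toFinset.card := finrank_span_le_card _
      _ = (setVec '' chordlessCycleSets G).ncard := (Set.ncard_eq_toFinset_card' _).symm
      _ ≤ (chordlessCycleSets G).ncard := Set.ncard_image_le (Set.toFinite _)
  have h3 : K.ncard + T.edgeSet.ncard = G.edgeSet.ncard :=
    Set.ncard_diff_add_ncard_of_subset (edgeSet_mono hle) (Set.toFinite _)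
  have h4 : T.edgeSet.ncard = Fintype.card V - 1 := by
    haveI : Fintype T.edgeSet := (Set.toFinite _).fintype
    rw [Set.ncard_eq_toFinset_card']
    have h := hT.card_edgeFinset
    rw [SimpleGraph.edgeFinset] at h
    omega
  have h5 : 1 ≤ Fintype.card V := Fintype.card_pos_iff.mpr hconn.nonempty
  have h6 : Fintype.card K = K.ncard := by
    rw [Set.ncard_eq_toFinset_card', Set.toFinset_card]
  have h7 : Nat.card V = Fintype.card V := Nat.card_eq_fintype_card
  omega
end

section
/- If a connected finite simple graph G contains two chordless cycles having more than one common edge, then the number of chordless cycles of G is strictly greater than e(G) − v(G) + 1. -/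
open SimpleGraph
variable {V : Type*}

namespace CCproof

open Finset
open scoped symmDiff

/-- classical indicator -/
noncomputable def indi (P : Prop) : ZMod 2 :=
  @ite _ P (Classical.propDecidable P) 1 0

lemma indi_pos {P : Prop} (h : P) : indi P = 1 := by
  rw [indi, if_pos h]

lemma indi_neg {P : Prop} (h : ¬ P) : indi P = 0 := by
  rw [indi, if_neg h]

lemma zmod2_add_self : ∀ a : ZMod 2, a + a = 0 := by decide

lemma zmod2_cases : ∀ a : ZMod 2, a = 0 ∨ a = 1 := by decide

lemma sum_symmDiff {α M : Type*} [DecidableEq α] [AddCommGroup M]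
    (h2 : ∀ x : M, x + x = 0) (A B : Finset α) (f : α → M) :
    ∑ x ∈ A ∆ B, f x = (∑ x ∈ A, f x) + ∑ x ∈ B, f x := by
  have h1 : (∑ x ∈ A ∪ B, f x) + ∑ x ∈ A ∩ B, f x = (∑ x ∈ A, f x) + ∑ x ∈ B, f x :=
    Finset.sum_union_inter
  have hsub : A ∩ B ⊆ A ∪ B := (Finset.inter_subset_left).trans Finset.subset_union_left
  have h3 : (∑ x ∈ (A ∪ B) \ (A ∩ B), f x) + ∑ x ∈ A ∩ B, f x = ∑ x ∈ A ∪ B, f x :=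
    Finset.sum_sdiff hsub
  have hAB : A ∆ B = (A ∪ B) \ (A ∩ B) := by
    ext a
    simp only [Finset.mem_symmDiff, Finset.mem_sdiff, Finset.mem_union, Finset.mem_inter]
    tauto
  calc ∑ x ∈ A ∆ B, f x
      = (∑ x ∈ (A ∪ B) \ (A ∩ B), f x) := by rw [hAB]
    _ = ((∑ x ∈ (A ∪ B) \ (A ∩ B), f x) + ∑ x ∈ A ∩ B, f x) + ∑ x ∈ A ∩ B, f x := by
        rw [add_assoc, h2, add_zero]
    _ = (∑ x ∈ A ∪ B, f x) + ∑ x ∈ A ∩ B, f x := by rw [h3]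
    _ = (∑ x ∈ A, f x) + ∑ x ∈ B, f x := h1

lemma mem_union_of_symmDiff {α : Type*} [DecidableEq α] {A B : Finset α} {a : α}
    (h : a ∈ A ∆ B) : a ∈ A ∨ a ∈ B := by
  rcases Finset.mem_symmDiff.mp h with ⟨h1, _⟩ | ⟨h1, _⟩
  · exact Or.inl h1
  · exact Or.inr h1

section Graph

variable [Fintype V] {G : SimpleGraph V}

noncomputable instance : Fintype ↥G.edgeSet := Fintype.ofFinite _

/-- characteristic vector of a set of edges -/
noncomputable def chi (G : SimpleGraph V) [Fintype ↥G.edgeSet] (S : Set (Sym2 V)) :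
    ↥G.edgeSet → ZMod 2 :=
  fun e => indi ((e : Sym2 V) ∈ S)

/-- boundary map -/
noncomputable def bndL (G : SimpleGraph V) [Fintype ↥G.edgeSet] :
    (↥G.edgeSet → ZMod 2) →ₗ[ZMod 2] (V → ZMod 2) where
  toFun x := fun w => ∑ e : ↥G.edgeSet, x e * indi (w ∈ (e : Sym2 V))
  map_add' x y := by
    funext w
    simp only [Pi.add_apply, add_mul]
    rw [Finset.sum_add_distrib]
  map_smul' c x := by
    funext w
    simp only [Pi.smul_apply, smul_eq_mul, RingHom.id_apply]
    rw [Finset.mul_sum]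
    exact Finset.sum_congr rfl fun _ _ => (mul_assoc _ _ _)

lemma bndL_apply (x : ↥G.edgeSet → ZMod 2) (w : V) :
    bndL G x w = ∑ e : ↥G.edgeSet, x e * indi (w ∈ (e : Sym2 V)) := rfl

omit [Fintype V] in
lemma funext_add_self (x : ↥G.edgeSet → ZMod 2) : x + x = 0 := by
  funext e; exact zmod2_add_self _

lemma pi_add_self (x : V → ZMod 2) : x + x = 0 := by
  funext e; exact zmod2_add_self _

lemma indi_sym2 {a b w : V} (hne : a ≠ b) :
    indi (w ∈ s(a, b)) = indi (w = a) + indi (w = b) := by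
  by_cases hwa : w = a
  · subst hwa
    rw [indi_pos (Sym2.mem_mk_left _ _), indi_pos rfl, indi_neg hne, add_zero]
  · by_cases hwb : w = b
    · subst hwb
      rw [indi_pos (Sym2.mem_mk_right _ _), indi_neg hwa, indi_pos rfl, zero_add]
    · rw [indi_neg hwa, indi_neg hwb, indi_neg, add_zero]
      rw [Sym2.mem_iff]
      tauto

lemma bnd_chi_single {a b : V} (hab : G.Adj a b) :
    bndL G (chi G {s(a, b)}) =
      fun w => indi (w = a) + indi (w = b) := by
  funext w
  rw [bndL_apply]
  have hmem : s(a, b) ∈ G.edgeSet := hab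
  rw [Finset.sum_eq_single (⟨s(a,b), hmem⟩ : ↥G.edgeSet)]
  · show chi G {s(a,b)} ⟨s(a,b), hmem⟩ * indi (w ∈ s(a,b)) = _
    rw [chi, indi_pos (Set.mem_singleton _), one_mul]
    exact indi_sym2 hab.ne
  · intro e _ hne
    have h0 : ¬ ((e : Sym2 V) ∈ ({s(a,b)} : Set (Sym2 V))) := by
      simp only [Set.mem_singleton_iff]
      intro h
      exact hne (Subtype.ext h)
    rw [chi, indi_neg h0, zero_mul]
  · intro h
    exact absurd (Finset.mem_univ _) h

lemma bnd_chi_walk {u v : V} (p : G.Walk u v) (hnd : p.edges.Nodup) :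
    bndL G (chi G {e | e ∈ p.edges}) =
      fun w => indi (w = u) + indi (w = v) := by
  induction p with
  | nil =>
    rename_i u0
    have h0 : chi G {e | e ∈ (SimpleGraph.Walk.nil : G.Walk u0 u0).edges}
        = (0 : ↥G.edgeSet → ZMod 2) := by
      funext e
      refine indi_neg ?_
      intro hx
      rw [Set.mem_setOf_eq, SimpleGraph.Walk.edges_nil] at hx
      exact List.not_mem_nil hx
    rw [h0, map_zero]
    funext w
    rw [Pi.zero_apply]
    exact (zmod2_add_self _).symm
  | @cons a b c h q ih =>
    rw [SimpleGraph.Walk.edges_cons, List.nodup_cons] at hnd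
    obtain ⟨hne, hndq⟩ := hnd
    have hsplit : chi G {e | e ∈ (SimpleGraph.Walk.cons h q).edges}
        = chi G {s(a, b)} + chi G {e | e ∈ q.edges} := by
      funext e
      simp only [chi, Pi.add_apply, Set.mem_setOf_eq, SimpleGraph.Walk.edges_cons,
        List.mem_cons, Set.mem_singleton_iff]
      by_cases h1 : (e : Sym2 V) = s(a, b)
      · have h2 : ¬ ((e : Sym2 V) ∈ q.edges) := fun hq2 => hne (h1 ▸ hq2)
        rw [indi_pos (Or.inl h1), indi_pos h1, indi_neg h2, add_zero]
      · by_cases h2 : (e : Sym2 V) ∈ q.edges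
        · rw [indi_pos (Or.inr h2), indi_neg h1, indi_pos h2, zero_add]
        · rw [indi_neg (by tauto), indi_neg h1, indi_neg h2, add_zero]
    rw [hsplit, map_add, bnd_chi_single h, ih hndq]
    funext w
    simp only [Pi.add_apply]
    have hr : (indi (w = a) + indi (w = b)) + (indi (w = b) + indi (w = c))
        = (indi (w = a) + indi (w = c)) + (indi (w = b) + indi (w = b)) := by ring
    rw [hr, zmod2_add_self, add_zero]

lemma bnd_chi_cycle {v : V} (c : G.Walk v v) (hnd : c.edges.Nodup) :
    bndL G (chi G {e | e ∈ c.edges}) = 0 := by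
  rw [bnd_chi_walk c hnd]
  funext w
  rw [Pi.zero_apply]
  exact zmod2_add_self _

omit [Fintype V] in
lemma ncard_walkEdges {u v : V} (p : G.Walk u v) (hnd : p.edges.Nodup) :
    {e | e ∈ p.edges}.ncard = p.length := by
  classical
  have h1 : {e | e ∈ p.edges} = ↑p.edges.toFinset := by
    ext e; simp
  rw [h1, Set.ncard_coe_finset, List.toFinset_card_of_nodup hnd, SimpleGraph.Walk.length_edges]

omit [Fintype V] in
lemma walk_length_one_edges {a b : V} (q : G.Walk a b) (h : q.length = 1) :
    q.edges = [s(a, b)] := by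
  cases q with
  | nil => simp at h
  | cons hadj r =>
    cases r with
    | nil => simp
    | cons hadj2 r2 => simp [SimpleGraph.Walk.length_cons] at h

omit [Fintype V] in
lemma cycle_split {v x y : V} (c : G.Walk v v) (hc : c.IsCycle) (hx : x ∈ c.support)
    (hy : y ∈ c.support) (hadj : G.Adj x y) (hch : s(x, y) ∉ c.edges) :
    ∃ (c1 : G.Walk y y) (c2 : G.Walk x x), c1.IsCycle ∧ c2.IsCycle ∧
      c1.length < c.length ∧ c2.length < c.length ∧
      c1.length + c2.length = c.length + 2 ∧
      (∀ e : Sym2 V, (e ∈ c1.edges ∨ e ∈ c2.edges) ↔ (e ∈ c.edges ∨ e = s(x, y))) ∧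
      (∀ e : Sym2 V, (e ∈ c1.edges ∧ e ∈ c2.edges) ↔ e = s(x, y)) := by
  classical
  have hxy : x ≠ y := hadj.ne
  set c' := c.rotate x hx with hc'def
  have hcyc' : c'.IsCycle := hc.rotate hx
  have hrot := c.rotate_edges x hx
  have hmemE : ∀ e : Sym2 V, e ∈ c'.edges ↔ e ∈ c.edges := fun e => hrot.mem_iff
  have hlenE : c'.length = c.length := by
    have := hrot.perm.length_eq
    rwa [SimpleGraph.Walk.length_edges, SimpleGraph.Walk.length_edges] at this
  have hy' : y ∈ c'.support := by
    rw [hc'def, SimpleGraph.Walk.rotate, SimpleGraph.Walk.mem_support_append_iff, or_comm,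
      ← SimpleGraph.Walk.mem_support_append_iff, SimpleGraph.Walk.take_spec]
    exact hy
  set p := c'.takeUntil y hy' with hpdef
  set q := c'.dropUntil y hy' with hqdef
  have hspec : p.append q = c' := SimpleGraph.Walk.take_spec c' hy'
  have htail : c'.support.tail = p.support.tail ++ q.support.tail := by
    have h1 : c'.support = p.support ++ q.support.tail := by
      rw [← hspec, SimpleGraph.Walk.support_append]
    have h2 : p.support = x :: p.support.tail := SimpleGraph.Walk.support_eq_cons p
    rw [h2, List.cons_append] at h1
    have h3 : c'.support = x :: c'.support.tail := SimpleGraph.Walk.support_eq_cons c'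
    rw [h3] at h1
    have h4 := congrArg List.tail h1
    simpa using h4
  have hnd := hcyc'.support_nodup
  rw [htail] at hnd
  rw [List.nodup_append] at hnd
  obtain ⟨hnp, hnq, hdisj⟩ := hnd
  have hqx : x ∈ q.support.tail := by
    have hxq : x ∈ q.support := SimpleGraph.Walk.end_mem_support q
    rw [SimpleGraph.Walk.support_eq_cons q] at hxq
    rcases List.mem_cons.mp hxq with h | h
    · exact absurd h.symm hxy.symm
    · exact h
  have hpy : y ∈ p.support.tail := by
    have hyp : y ∈ p.support := SimpleGraph.Walk.end_mem_support p
    rw [SimpleGraph.Walk.support_eq_cons p] at hyp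
    rcases List.mem_cons.mp hyp with h | h
    · exact absurd h hxy.symm
    · exact h
  have hppath : p.IsPath := by
    rw [SimpleGraph.Walk.isPath_def, SimpleGraph.Walk.support_eq_cons p, List.nodup_cons]
    exact ⟨fun hxp => hdisj _ hxp _ hqx rfl, hnp⟩
  have hqpath : q.IsPath := by
    rw [SimpleGraph.Walk.isPath_def, SimpleGraph.Walk.support_eq_cons q, List.nodup_cons]
    exact ⟨fun hyq => hdisj _ hpy _ hyq rfl, hnq⟩
  have hedges : c'.edges = p.edges ++ q.edges := by
    rw [← hspec, SimpleGraph.Walk.edges_append]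
  have hndE := hcyc'.isCircuit.isTrail.edges_nodup
  rw [hedges, List.nodup_append] at hndE
  obtain ⟨hnpE, hnqE, hdisjE⟩ := hndE
  have hch' : s(x, y) ∉ c'.edges := fun h => hch ((hmemE _).mp h)
  have hchp : s(x, y) ∉ p.edges := fun h =>
    hch' (by rw [hedges]; exact List.mem_append_left _ h)
  have hchq : s(x, y) ∉ q.edges := fun h =>
    hch' (by rw [hedges]; exact List.mem_append_right _ h)
  have hlen : p.length + q.length = c.length := by
    have := congrArg SimpleGraph.Walk.length hspec
    rw [SimpleGraph.Walk.length_append] at this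
    rw [this, hlenE]
  have hq0 : q.length ≠ 0 := by
    intro h0
    have h1 : q.support.length = 1 := by rw [SimpleGraph.Walk.length_support, h0]
    rw [SimpleGraph.Walk.support_eq_cons q] at h1
    simp only [List.length_cons, Nat.add_eq_right] at h1
    rw [List.length_eq_zero_iff] at h1
    rw [h1] at hqx
    exact absurd hqx List.not_mem_nil
  have hq1 : q.length ≠ 1 := by
    intro h1
    apply hchq
    rw [walk_length_one_edges q h1]
    rw [Sym2.eq_swap]
    exact List.mem_singleton.mpr rfl
  have hp0 : p.length ≠ 0 := by
    intro h0
    have h1 : p.support.length = 1 := by rw [SimpleGraph.Walk.length_support, h0]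
    rw [SimpleGraph.Walk.support_eq_cons p] at h1
    simp only [List.length_cons, Nat.add_eq_right] at h1
    rw [List.length_eq_zero_iff] at h1
    rw [h1] at hpy
    exact absurd hpy List.not_mem_nil
  have hp1 : p.length ≠ 1 := by
    intro h1
    apply hchp
    rw [walk_length_one_edges p h1]
    exact List.mem_singleton.mpr rfl
  refine ⟨SimpleGraph.Walk.cons hadj.symm p, SimpleGraph.Walk.cons hadj q, ?_, ?_, ?_, ?_, ?_,
    ?_, ?_⟩
  · rw [SimpleGraph.Walk.cons_isCycle_iff]
    refine ⟨hppath, ?_⟩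
    rw [Sym2.eq_swap]
    exact hchp
  · rw [SimpleGraph.Walk.cons_isCycle_iff]
    exact ⟨hqpath, hchq⟩
  · simp only [SimpleGraph.Walk.length_cons]
    omega
  · simp only [SimpleGraph.Walk.length_cons]
    omega
  · simp only [SimpleGraph.Walk.length_cons]
    omega
  · intro e
    simp only [SimpleGraph.Walk.edges_cons, List.mem_cons]
    have hmc : e ∈ c.edges ↔ e ∈ p.edges ∨ e ∈ q.edges := by
      rw [← hmemE, hedges, List.mem_append]
    rw [hmc]
    rw [Sym2.eq_swap (a := y) (b := x)]
    tauto
  · intro e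
    simp only [SimpleGraph.Walk.edges_cons, List.mem_cons]
    rw [Sym2.eq_swap (a := y) (b := x)]
    constructor
    · rintro ⟨h1 | h1, h2 | h2⟩
      · exact h1
      · exact h1
      · exact h2
      · exact absurd h2 (fun h => hdisjE _ h1 _ h rfl)
    · rintro rfl
      exact ⟨Or.inl rfl, Or.inl rfl⟩

omit [Fintype V] in
lemma chordless_mem_CC {v : V} (c : G.Walk v v) (hc : c.IsCycle)
    (hcl : ∀ x y, x ∈ c.support → y ∈ c.support → G.Adj x y → s(x, y) ∈ c.edges) :
    {e | e ∈ c.edges} ∈ chordlessCycleSets G :=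
  ⟨v, c, ⟨hc, hcl⟩, rfl⟩

lemma decompose_cycle : ∀ (n : ℕ) {v : V} (c : G.Walk v v), c.IsCycle → c.length ≤ n →
    ∃ A : Finset (Set (Sym2 V)), ↑A ⊆ chordlessCycleSets G ∧
      (∑ S ∈ A, chi G S) = chi G {e | e ∈ c.edges} ∧
      (∀ S ∈ A, S.ncard ≤ c.length) ∧
      (∀ S ∈ A, ∀ T ∈ A, S ≠ T → S.ncard + T.ncard ≤ c.length + 2) := by
  classical
  intro n
  induction n with
  | zero =>
    intro v c hc hl
    have := hc.three_le_length
    omega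
  | succ n ih =>
    intro v c hc hl
    by_cases hcl : ∀ x y, x ∈ c.support → y ∈ c.support → G.Adj x y → s(x, y) ∈ c.edges
    · refine ⟨{{e | e ∈ c.edges}}, ?_, ?_, ?_, ?_⟩
      · intro S hS
        simp only [Finset.coe_singleton, Set.mem_singleton_iff] at hS
        rw [hS]
        exact chordless_mem_CC c hc hcl
      · simp
      · intro S hS
        simp only [Finset.mem_singleton] at hS
        rw [hS, ncard_walkEdges c hc.isCircuit.isTrail.edges_nodup]
      · intro S hS T hT hne
        simp only [Finset.mem_singleton] at hS hT
        exact absurd (hS.trans hT.symm) hne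
    · push_neg at hcl
      obtain ⟨x, y, hx, hy, hadj, hch⟩ := hcl
      obtain ⟨c1, c2, hc1, hc2, hlt1, hlt2, hsum, hA, hB⟩ := cycle_split c hc hx hy hadj hch
      obtain ⟨A1, hA1sub, hA1sum, hA1one, hA1two⟩ := ih c1 hc1 (by omega)
      obtain ⟨A2, hA2sub, hA2sum, hA2one, hA2two⟩ := ih c2 hc2 (by omega)
      refine ⟨A1 ∆ A2, ?_, ?_, ?_, ?_⟩
      · intro S hS
        simp only [Finset.coe_symmDiff, Set.mem_symmDiff] at hS
        rcases hS with ⟨h1, _⟩ | ⟨h2, _⟩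
        · exact hA1sub h1
        · exact hA2sub h2
      · rw [sum_symmDiff funext_add_self, hA1sum, hA2sum]
        funext e
        simp only [chi, Pi.add_apply, Set.mem_setOf_eq]
        by_cases h1 : (e : Sym2 V) ∈ c1.edges <;> by_cases h2 : (e : Sym2 V) ∈ c2.edges
        · have hexy := (hB e).mp ⟨h1, h2⟩
          have hnc : (e : Sym2 V) ∉ c.edges := by
            rw [hexy]; exact hch
          rw [indi_pos h1, indi_pos h2, indi_neg hnc]
          exact zmod2_add_self 1
        · have hc' : (e : Sym2 V) ∈ c.edges ∨ (e : Sym2 V) = s(x, y) :=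
            (hA e).mp (Or.inl h1)
          have hce : (e : Sym2 V) ∈ c.edges := by
            rcases hc' with h | h
            · exact h
            · exact absurd ((hB e).mpr h).2 h2
          rw [indi_pos h1, indi_neg h2, indi_pos hce, add_zero]
        · have hc' : (e : Sym2 V) ∈ c.edges ∨ (e : Sym2 V) = s(x, y) :=
            (hA e).mp (Or.inr h2)
          have hce : (e : Sym2 V) ∈ c.edges := by
            rcases hc' with h | h
            · exact h
            · exact absurd ((hB e).mpr h).1 h1
          rw [indi_neg h1, indi_pos h2, indi_pos hce, zero_add]
        · have hnc : (e : Sym2 V) ∉ c.edges := by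
            intro hce
            rcases (hA e).mpr (Or.inl hce) with h | h
            · exact h1 h
            · exact h2 h
          rw [indi_neg h1, indi_neg h2, indi_neg hnc, add_zero]
      · intro S hS
        rcases mem_union_of_symmDiff hS with h | h
        · have := hA1one S h; omega
        · have := hA2one S h; omega
      · intro S hS T hT hne
        rcases mem_union_of_symmDiff hS with h | h <;>
          rcases mem_union_of_symmDiff hT with h' | h'
        · have := hA1two S h T h' hne; omega
        · have := hA1one S h; have := hA2one T h'; omega
        · have := hA2one S h; have := hA1one T h'; omega
        · have := hA2two S h T h' hne; omega

omit [Fintype V] in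
lemma CC_spec {S : Set (Sym2 V)} (hS : S ∈ chordlessCycleSets G) :
    ∃ (v : V) (c : G.Walk v v), c.IsCycle ∧ S = {e | e ∈ c.edges} := by
  obtain ⟨v, c, ⟨hc, _⟩, rfl⟩ := hS
  exact ⟨v, c, hc, rfl⟩

omit [Fintype V] in
lemma CC_sub_edgeSet {S : Set (Sym2 V)} (hS : S ∈ chordlessCycleSets G) : S ⊆ G.edgeSet := by
  obtain ⟨v, c, _, rfl⟩ := CC_spec hS
  intro e he
  exact c.edges_subset_edgeSet he

lemma bnd_chi_CC {S : Set (Sym2 V)} (hS : S ∈ chordlessCycleSets G) :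
    bndL G (chi G S) = 0 := by
  obtain ⟨v, c, hc, rfl⟩ := CC_spec hS
  exact bnd_chi_cycle c hc.isCircuit.isTrail.edges_nodup

/-- support of an edge vector, as a set of edges -/
def suppS (G : SimpleGraph V) [Fintype ↥G.edgeSet] (x : ↥G.edgeSet → ZMod 2) :
    Set (Sym2 V) :=
  {z | ∃ h : z ∈ G.edgeSet, x ⟨z, h⟩ ≠ 0}

lemma mem_suppS {x : ↥G.edgeSet → ZMod 2} (e : ↥G.edgeSet) :
    (e : Sym2 V) ∈ suppS G x ↔ x e ≠ 0 := by
  constructor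
  · rintro ⟨h, hx⟩
    convert hx using 2
  · intro h
    exact ⟨e.2, by convert h using 2⟩

lemma suppS_sub (x : ↥G.edgeSet → ZMod 2) : suppS G x ⊆ G.edgeSet := fun _ hz => hz.1

lemma card_filter_eq_ncard' (P : Sym2 V → Prop)
    [DecidablePred fun e : ↥G.edgeSet => P ↑e] :
    (Finset.univ.filter (fun e : ↥G.edgeSet => P ↑e)).card
      = {z | z ∈ G.edgeSet ∧ P z}.ncard := by
  classical
  haveI : Fintype ↥{z | z ∈ G.edgeSet ∧ P z} := Fintype.ofFinite _
  rw [Set.ncard_eq_toFinset_card']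
  apply Finset.card_bij (fun (e : ↥G.edgeSet) _ => (e : Sym2 V))
  · intro e he
    simp only [Finset.mem_filter] at he
    simp only [Set.mem_toFinset, Set.mem_setOf_eq]
    exact ⟨e.2, he.2⟩
  · intro e1 _ e2 _ h
    exact Subtype.ext h
  · intro z hz
    simp only [Set.mem_toFinset, Set.mem_setOf_eq] at hz
    exact ⟨⟨z, hz.1⟩, Finset.mem_filter.mpr ⟨Finset.mem_univ _, hz.2⟩, rfl⟩

lemma sum_indi_edges (P : Sym2 V → Prop) :
    (∑ e : ↥G.edgeSet, indi (P ↑e)) = (({z | z ∈ G.edgeSet ∧ P z}).ncard : ZMod 2) := by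
  classical
  have h1 : (∑ e : ↥G.edgeSet, indi (P ↑e))
      = ∑ e : ↥G.edgeSet, (if P ↑e then (1 : ZMod 2) else 0) := by
    apply Finset.sum_congr rfl
    intro e _
    by_cases h : P ↑e
    · rw [indi_pos h, if_pos h]
    · rw [indi_neg h, if_neg h]
  rw [h1, Finset.sum_boole, card_filter_eq_ncard' P]

lemma sum_indi_verts (P : V → Prop) :
    (∑ w : V, indi (P w)) = (({w | P w}).ncard : ZMod 2) := by
  classical
  have h1 : (∑ w : V, indi (P w)) = ∑ w : V, (if P w then (1 : ZMod 2) else 0) := by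
    apply Finset.sum_congr rfl
    intro w _
    by_cases h : P w
    · rw [indi_pos h, if_pos h]
    · rw [indi_neg h, if_neg h]
  rw [h1, Finset.sum_boole]
  congr 1
  haveI : Fintype ↥{w | P w} := Fintype.ofFinite _
  rw [Set.ncard_eq_toFinset_card']
  apply Finset.card_bij (fun w _ => w)
  · intro w hw
    simp only [Finset.mem_filter] at hw
    simp only [Set.mem_toFinset, Set.mem_setOf_eq]
    exact hw.2
  · intro w1 _ w2 _ h
    exact h
  · intro w hw
    simp only [Set.mem_toFinset, Set.mem_setOf_eq] at hw
    exact ⟨w, Finset.mem_filter.mpr ⟨Finset.mem_univ _, hw⟩, rfl⟩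

lemma exists_cycle_of_even (S : Set (Sym2 V)) (hsub : S ⊆ G.edgeSet) (hne : S.Nonempty)
    (heven : ∀ w : V, Even ({z | z ∈ S ∧ w ∈ z}.ncard)) :
    ∃ (v : V) (K : G.Walk v v), K.IsCycle ∧ ∀ e ∈ K.edges, e ∈ S := by
  classical
  have hevenF : ∀ w : V,
      Even ((Finset.univ.filter
        (fun e : ↥G.edgeSet => (e : Sym2 V) ∈ S ∧ w ∈ (e : Sym2 V))).card) := by
    intro w
    have h1 := card_filter_eq_ncard' (G := G) (fun z => z ∈ S ∧ w ∈ z)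
    have h2 : {z | z ∈ G.edgeSet ∧ (z ∈ S ∧ w ∈ z)} = {z | z ∈ S ∧ w ∈ z} := by
      ext z
      simp only [Set.mem_setOf_eq]
      exact ⟨fun h => h.2, fun h => ⟨hsub h.1, h⟩⟩
    rw [h1, h2]
    exact heven w
  by_contra hno
  push_neg at hno
  have grow : ∀ (u w : V) (p : G.Walk u w), p.IsPath → (∀ e ∈ p.edges, e ∈ S) →
      1 ≤ p.length →
      ∃ (u' : V) (p' : G.Walk u' w), p'.IsPath ∧ (∀ e ∈ p'.edges, e ∈ S) ∧
        p'.length = p.length + 1 := by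
    intro u w p hp hpS hlen
    cases p with
    | nil => simp at hlen
    | @cons _ b _ hadj r =>
      have hfirst : s(u, b) ∈ (SimpleGraph.Walk.cons hadj r).edges := by
        rw [SimpleGraph.Walk.edges_cons]
        exact List.mem_cons_self
      have hfS : s(u, b) ∈ S := hpS _ hfirst
      set Iu : Finset ↥G.edgeSet :=
        Finset.univ.filter
          (fun e : ↥G.edgeSet => (e : Sym2 V) ∈ S ∧ u ∈ (e : Sym2 V)) with hIu
      have he1 : (⟨s(u, b), hsub hfS⟩ : ↥G.edgeSet) ∈ Iu := by
        rw [hIu]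
        simp only [Finset.mem_filter, Finset.mem_univ, true_and]
        exact ⟨hfS, Sym2.mem_mk_left u b⟩
      have hcard2 : 1 < Iu.card := by
        have h1 : 1 ≤ Iu.card := Finset.card_pos.mpr ⟨_, he1⟩
        obtain ⟨k, hk⟩ := hevenF u
        rw [← hIu] at hk
        omega
      obtain ⟨z, hz, hzne⟩ := Finset.exists_mem_ne hcard2 ⟨s(u, b), hsub hfS⟩
      rw [hIu] at hz
      simp only [Finset.mem_filter, Finset.mem_univ, true_and] at hz
      obtain ⟨hzS, hzu⟩ := hz
      obtain ⟨w', hw'⟩ := Sym2.mem_iff_exists.mp hzu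
      have hadj' : G.Adj u w' := by
        rw [← SimpleGraph.mem_edgeSet, ← hw']
        exact z.2
      have hw'b : w' ≠ b := by
        intro h
        apply hzne
        apply Subtype.ext
        rw [hw', h]
      by_cases hwsup : w' ∈ (SimpleGraph.Walk.cons hadj r).support
      · exfalso
        set q := (SimpleGraph.Walk.cons hadj r).takeUntil w' hwsup with hqdef
        have hq : q.IsPath := hp.takeUntil hwsup
        have hqe : ∀ e ∈ q.edges, e ∈ S := fun e he =>
          hpS e (SimpleGraph.Walk.edges_takeUntil_subset _ _ he)
        have hnotedge : s(w', u) ∉ q.edges := by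
          intro hmem
          have hmem' : s(u, w') ∈ (SimpleGraph.Walk.cons hadj r).edges := by
            apply SimpleGraph.Walk.edges_takeUntil_subset _ hwsup
            rw [Sym2.eq_swap]
            exact hmem
          rw [SimpleGraph.Walk.edges_cons, List.mem_cons] at hmem'
          rcases hmem' with h | h
          · have : w' = b := Sym2.congr_right.mp h
            exact hw'b this
          · have : u ∈ r.support := SimpleGraph.Walk.fst_mem_support_of_mem_edges r h
            rw [SimpleGraph.Walk.cons_isPath_iff] at hp
            exact hp.2 this
        have hcyc : (SimpleGraph.Walk.cons hadj'.symm q).IsCycle := by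
          rw [SimpleGraph.Walk.cons_isCycle_iff]
          exact ⟨hq, hnotedge⟩
        obtain ⟨e, he, heS⟩ := hno w' _ hcyc
        apply heS
        rw [SimpleGraph.Walk.edges_cons, List.mem_cons] at he
        rcases he with h | h
        · rw [h, Sym2.eq_swap, ← hw']
          exact hzS
        · exact hqe e h
      · refine ⟨w', SimpleGraph.Walk.cons hadj'.symm (SimpleGraph.Walk.cons hadj r),
          hp.cons hwsup, ?_, ?_⟩
        · intro e he
          rw [SimpleGraph.Walk.edges_cons, List.mem_cons] at he
          rcases he with h | h
          · rw [h, Sym2.eq_swap, ← hw']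
            exact hzS
          · exact hpS e h
        · simp [SimpleGraph.Walk.length_cons]
  obtain ⟨z₀, hz₀⟩ := hne
  obtain ⟨b₀, hb₀⟩ := Sym2.mem_iff_exists.mp (Sym2.out_fst_mem z₀)
  set a₀ := z₀.out.1 with ha₀
  have hadj₀ : G.Adj a₀ b₀ := by
    rw [← SimpleGraph.mem_edgeSet, ← hb₀]
    exact hsub hz₀
  have hbase : ∀ k : ℕ, ∃ (u w : V) (p : G.Walk u w), p.IsPath ∧
      (∀ e ∈ p.edges, e ∈ S) ∧ p.length = k + 1 := by
    intro k
    induction k with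
    | zero =>
      refine ⟨a₀, b₀, SimpleGraph.Walk.cons hadj₀ SimpleGraph.Walk.nil, ?_, ?_, ?_⟩
      · rw [SimpleGraph.Walk.cons_isPath_iff]
        constructor
        · exact SimpleGraph.Walk.IsPath.nil
        · simp [hadj₀.ne]
      · intro e he
        simp only [SimpleGraph.Walk.edges_cons, SimpleGraph.Walk.edges_nil,
          List.mem_singleton] at he
        rw [he, ← hb₀]
        exact hz₀
      · simp
    | succ k ihk =>
      obtain ⟨u, w, p, hp, hpS, hplen⟩ := ihk
      obtain ⟨u', p', hp', hp'S, hp'len⟩ := grow u w p hp hpS (by omega)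
      exact ⟨u', w, p', hp', hp'S, by omega⟩
  obtain ⟨u, w, p, hp, _, hplen⟩ := hbase (Fintype.card V)
  have := hp.length_lt
  omega

lemma decompose_even : ∀ (N : ℕ) (x : ↥G.edgeSet → ZMod 2), (suppS G x).ncard ≤ N →
    bndL G x = 0 →
    ∃ A : Finset (Set (Sym2 V)), ↑A ⊆ chordlessCycleSets G ∧ (∑ S ∈ A, chi G S) = x ∧
      (∀ S ∈ A, S.ncard ≤ (suppS G x).ncard) ∧
      (∀ S ∈ A, ∀ T ∈ A, S ≠ T → S.ncard + T.ncard ≤ (suppS G x).ncard + 2) := by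
  classical
  intro N
  induction N with
  | zero =>
    intro x hcard hbnd
    have hx : x = 0 := by
      funext e
      by_contra hxe
      have hmem : (e : Sym2 V) ∈ suppS G x := (mem_suppS e).mpr hxe
      have hpos : 0 < (suppS G x).ncard := by
        rw [Set.ncard_pos (Set.toFinite _)]
        exact ⟨_, hmem⟩
      omega
    exact ⟨∅, by simp, by simp [hx], by simp, by simp⟩
  | succ N ih =>
    intro x hcard hbnd
    by_cases hx0 : x = 0
    · exact ⟨∅, by simp, by simp [hx0], by simp, by simp⟩
    · set S₀ : Set (Sym2 V) := suppS G x with hS₀def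
      have hsub : S₀ ⊆ G.edgeSet := suppS_sub x
      have hne : S₀.Nonempty := by
        have : ∃ e : ↥G.edgeSet, x e ≠ 0 := by
          by_contra hall
          push_neg at hall
          exact hx0 (funext fun e => hall e)
        obtain ⟨e, he⟩ := this
        exact ⟨e, (mem_suppS e).mpr he⟩
      have mem_S₀ : ∀ e : ↥G.edgeSet, ((e : Sym2 V) ∈ S₀) ↔ x e ≠ 0 := by
        intro e
        rw [hS₀def]
        exact mem_suppS e
      have heven : ∀ w : V, Even ({z | z ∈ S₀ ∧ w ∈ z}.ncard) := by
        intro w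
        have hb : bndL G x w = 0 := by rw [hbnd]; rfl
        rw [bndL_apply] at hb
        have hsum : (∑ e : ↥G.edgeSet, x e * indi (w ∈ (e : Sym2 V)))
            = (({z | z ∈ G.edgeSet ∧ (z ∈ S₀ ∧ w ∈ z)}).ncard : ZMod 2) := by
          rw [← sum_indi_edges (G := G) (fun z => z ∈ S₀ ∧ w ∈ z)]
          apply Finset.sum_congr rfl
          intro e _
          rcases zmod2_cases (x e) with h | h
          · have h0 : ¬ ((e : Sym2 V) ∈ S₀ ∧ w ∈ (e : Sym2 V)) := by
              rw [mem_S₀]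
              tauto
            rw [h, zero_mul, indi_neg h0]
          · have hxe : x e ≠ 0 := by rw [h]; decide
            by_cases hw : w ∈ (e : Sym2 V)
            · rw [h, one_mul, indi_pos hw, indi_pos ⟨(mem_S₀ e).mpr hxe, hw⟩]
            · rw [indi_neg hw, mul_zero, indi_neg (fun hc => hw hc.2)]
        rw [hsum] at hb
        rw [ZMod.natCast_eq_zero_iff] at hb
        have h2 : {z | z ∈ G.edgeSet ∧ (z ∈ S₀ ∧ w ∈ z)} = {z | z ∈ S₀ ∧ w ∈ z} := by
          ext z
          simp only [Set.mem_setOf_eq]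
          exact ⟨fun h => h.2, fun h => ⟨hsub h.1, h⟩⟩
        rw [h2] at hb
        exact even_iff_two_dvd.mpr hb
      obtain ⟨v, K, hK, hKS⟩ := exists_cycle_of_even S₀ hsub hne heven
      have hKnd : K.edges.Nodup := hK.isCircuit.isTrail.edges_nodup
      have hKncard : {z | z ∈ K.edges}.ncard = K.length := ncard_walkEdges K hKnd
      have hKsubsupp : {z | z ∈ K.edges} ⊆ S₀ := fun z hz => hKS z hz
      set x' := x + chi G {e | e ∈ K.edges} with hx'def
      have hsupp' : suppS G x' = S₀ \ {z | z ∈ K.edges} := by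
        ext z
        constructor
        · rintro ⟨hzE, hz⟩
          rw [hx'def] at hz
          simp only [Pi.add_apply, chi] at hz
          by_cases hzK : z ∈ K.edges
          · exfalso
            have hx1 : x ⟨z, hzE⟩ = 1 := by
              rcases zmod2_cases (x ⟨z, hzE⟩) with h | h
              · exfalso
                apply (mem_S₀ (⟨z, hzE⟩ : ↥G.edgeSet)).not.mpr (by simp [h])
                exact hKS z hzK
              · exact h
            rw [hx1, indi_pos (by exact hzK)] at hz
            exact hz (by decide)
          · constructor
            · rw [indi_neg (by exact hzK), add_zero] at hz
              exact ⟨hzE, hz⟩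
            · exact hzK
        · rintro ⟨hzS, hzK⟩
          obtain ⟨hzE, hzx⟩ := hzS
          refine ⟨hzE, ?_⟩
          rw [hx'def]
          simp only [Pi.add_apply, chi]
          rw [indi_neg (by exact hzK), add_zero]
          exact hzx
      have hcard' : (suppS G x').ncard + K.length = S₀.ncard := by
        rw [hsupp', ← hKncard]
        exact Set.ncard_diff_add_ncard_of_subset hKsubsupp (Set.toFinite _)
      have hK3 : 3 ≤ K.length := hK.three_le_length
      have hbnd' : bndL G x' = 0 := by
        rw [hx'def, map_add, hbnd, bnd_chi_cycle K hKnd, add_zero]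
      obtain ⟨A', hA'sub, hA'sum, hA'one, hA'two⟩ := ih x' (by omega) hbnd'
      obtain ⟨AK, hAKsub, hAKsum, hAKone, hAKtwo⟩ := decompose_cycle K.length K hK le_rfl
      have hKlen_le : K.length ≤ S₀.ncard := by omega
      have hx'le : (suppS G x').ncard ≤ S₀.ncard := by omega
      refine ⟨AK ∆ A', ?_, ?_, ?_, ?_⟩
      · intro S hS
        simp only [Finset.coe_symmDiff, Set.mem_symmDiff] at hS
        rcases hS with ⟨h1, _⟩ | ⟨h2, _⟩
        · exact hAKsub h1
        · exact hA'sub h2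
      · rw [sum_symmDiff funext_add_self, hAKsum, hA'sum, hx'def]
        rw [add_comm x _, ← add_assoc, funext_add_self, zero_add]
      · intro S hS
        rcases mem_union_of_symmDiff hS with h | h
        · have := hAKone S h; omega
        · have := hA'one S h; omega
      · intro S hS T hT hne'
        rcases mem_union_of_symmDiff hS with h | h <;>
          rcases mem_union_of_symmDiff hT with h' | h'
        · have := hAKtwo S h T h' hne'; omega
        · have := hAKone S h; have := hA'one T h'; omega
        · have := hA'one S h; have := hAKone T h'; omega
        · have := hA'two S h T h' hne'; omega

lemma not_linearIndependent {S1 S2 : Set (Sym2 V)} (h1 : S1 ∈ chordlessCycleSets G)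
    (h2 : S2 ∈ chordlessCycleSets G) (hne : S1 ≠ S2) (hcap : 1 < (S1 ∩ S2).ncard) :
    ¬ LinearIndependent (ZMod 2)
      (fun S : ↥(chordlessCycleSets G) => chi G (S : Set (Sym2 V))) := by
  classical
  intro hli
  set x := chi G S1 + chi G S2 with hxdef
  have hbnd : bndL G x = 0 := by
    rw [hxdef, map_add, bnd_chi_CC h1, bnd_chi_CC h2, add_zero]
  have hs1E := CC_sub_edgeSet h1
  have hs2E := CC_sub_edgeSet h2
  have hsupp : suppS G x = (S1 \ S2) ∪ (S2 \ S1) := by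
    ext z
    constructor
    · rintro ⟨hzE, hz⟩
      rw [hxdef] at hz
      simp only [Pi.add_apply, chi] at hz
      by_cases hz1 : z ∈ S1 <;> by_cases hz2 : z ∈ S2
      · exfalso
        rw [indi_pos (by exact hz1), indi_pos (by exact hz2)] at hz
        exact hz (by decide)
      · exact Or.inl ⟨hz1, hz2⟩
      · exact Or.inr ⟨hz2, hz1⟩
      · exfalso
        rw [indi_neg (by exact hz1), indi_neg (by exact hz2)] at hz
        exact hz (by decide)
    · intro hz
      have hzE : z ∈ G.edgeSet := by
        rcases hz with ⟨hz1, _⟩ | ⟨hz2, _⟩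
        · exact hs1E hz1
        · exact hs2E hz2
      refine ⟨hzE, ?_⟩
      rw [hxdef]
      simp only [Pi.add_apply, chi]
      rcases hz with ⟨hz1, hz2⟩ | ⟨hz2, hz1⟩
      · rw [indi_pos (by exact hz1), indi_neg (by exact hz2), add_zero]
        decide
      · rw [indi_neg (by exact hz1), indi_pos (by exact hz2), zero_add]
        decide
  obtain ⟨A, hAsub, hAsum, _, hAtwo⟩ :=
    decompose_even (suppS G x).ncard x le_rfl hbnd
  have hzero : ∀ C : Finset (Set (Sym2 V)), ↑C ⊆ chordlessCycleSets G →
      (∑ S ∈ C, chi G S) = 0 → C = ∅ := by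
    intro C hC hsum0
    by_contra hCne
    obtain ⟨S, hS⟩ := Finset.nonempty_of_ne_empty hCne
    set C' : Finset ↥(chordlessCycleSets G) := C.subtype (· ∈ chordlessCycleSets G) with hC'
    have hsum' : (∑ i ∈ C', (1 : ZMod 2) • chi G (i : Set (Sym2 V))) = 0 := by
      simp only [one_smul]
      rw [hC', Finset.sum_subtype_of_mem _ (fun x hx => hC hx)]
      exact hsum0
    have := linearIndependent_iff'.mp hli C' (fun _ => 1) hsum' ⟨S, hC hS⟩
      (by rw [hC']; simp [hS])
    exact one_ne_zero this
  have hAeq : A = ({S1, S2} : Finset (Set (Sym2 V))) := by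
    have hsum0 : (∑ S ∈ A ∆ ({S1, S2} : Finset (Set (Sym2 V))), chi G S) = 0 := by
      rw [sum_symmDiff funext_add_self, hAsum, Finset.sum_pair hne, ← hxdef]
      exact funext_add_self x
    have hsub' : ↑(A ∆ ({S1, S2} : Finset (Set (Sym2 V)))) ⊆ chordlessCycleSets G := by
      intro S hS
      rcases mem_union_of_symmDiff hS with h | h
      · exact hAsub h
      · rcases Finset.mem_insert.mp h with h' | h'
        · rw [h']; exact h1
        · rw [Finset.mem_singleton.mp h']; exact h2
    have := hzero _ hsub' hsum0
    rwa [Finset.symmDiff_eq_empty] at this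
  have hS1A : S1 ∈ A := by rw [hAeq]; exact Finset.mem_insert_self _ _
  have hS2A : S2 ∈ A := by
    rw [hAeq]; exact Finset.mem_insert_of_mem (Finset.mem_singleton_self _)
  have hbound := hAtwo S1 hS1A S2 hS2A hne
  -- cardinality arithmetic
  have hfin1 : S1.Finite := Set.toFinite _
  have hfin2 : S2.Finite := Set.toFinite _
  have hd1 : (S1 ∩ S2).ncard + (S1 \ S2).ncard = S1.ncard :=
    Set.ncard_inter_add_ncard_diff_eq_ncard S1 S2 hfin1
  have hd2 : (S2 ∩ S1).ncard + (S2 \ S1).ncard = S2.ncard :=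
    Set.ncard_inter_add_ncard_diff_eq_ncard S2 S1 hfin2
  have hcomm : (S2 ∩ S1).ncard = (S1 ∩ S2).ncard := by rw [Set.inter_comm]
  have hdisj : Disjoint (S1 \ S2) (S2 \ S1) := by
    rw [Set.disjoint_left]
    rintro z ⟨hz1, hz2⟩ ⟨hz2', hz1'⟩
    exact hz2 hz2'
  have hu : (suppS G x).ncard = (S1 \ S2).ncard + (S2 \ S1).ncard := by
    rw [hsupp]
    exact Set.ncard_union_eq hdisj (Set.toFinite _) (Set.toFinite _)
  omega


/-- sum-of-coordinates functional -/
noncomputable def sumF : (V → ZMod 2) →ₗ[ZMod 2] ZMod 2 where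
  toFun f := ∑ w : V, f w
  map_add' f g := by
    simp only [Pi.add_apply]
    rw [Finset.sum_add_distrib]
  map_smul' c f := by
    simp only [Pi.smul_apply, smul_eq_mul, RingHom.id_apply]
    rw [Finset.mul_sum]

/-- delta function -/
noncomputable def delta (u : V) : V → ZMod 2 := fun w => indi (w = u)

lemma sum_indi_eq_one (u : V) : (∑ w : V, indi (w = u)) = 1 := by
  classical
  rw [Finset.sum_eq_single u]
  · exact indi_pos rfl
  · intro w _ hne
    exact indi_neg hne
  · intro hmem
    exact absurd (Finset.mem_univ _) hmem

lemma sumF_delta (u : V) : sumF (delta u) = 1 := sum_indi_eq_one u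

lemma sum_indi_mem_sym2 {z : Sym2 V} (hz : z ∈ G.edgeSet) :
    (∑ w : V, indi (w ∈ z)) = 0 := by
  obtain ⟨b, hb⟩ := Sym2.mem_iff_exists.mp (Sym2.out_fst_mem z)
  set a := z.out.1 with ha
  have hadj : G.Adj a b := by
    rw [← SimpleGraph.mem_edgeSet, ← hb]
    exact hz
  have h1 : ∀ w : V, indi (w ∈ z) = indi (w = a) + indi (w = b) := by
    intro w
    rw [hb]
    exact indi_sym2 hadj.ne
  rw [Finset.sum_congr rfl (fun w _ => h1 w), Finset.sum_add_distrib,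
    sum_indi_eq_one, sum_indi_eq_one]
  decide

lemma range_bndL (hconn : G.Connected) :
    LinearMap.range (bndL G) = LinearMap.ker (sumF (V := V)) := by
  classical
  apply le_antisymm
  · rintro f ⟨x, rfl⟩
    rw [LinearMap.mem_ker]
    show (∑ w : V, ∑ e : ↥G.edgeSet, x e * indi (w ∈ (e : Sym2 V))) = 0
    rw [Finset.sum_comm]
    apply Finset.sum_eq_zero
    intro e _
    rw [← Finset.mul_sum, sum_indi_mem_sym2 e.2, mul_zero]
  · intro f hf
    rw [LinearMap.mem_ker] at hf
    have key : ∀ (k : ℕ) (f : V → ZMod 2), sumF f = 0 → {w | f w ≠ 0}.ncard ≤ k →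
        f ∈ LinearMap.range (bndL G) := by
      intro k
      induction k with
      | zero =>
        intro f hf hc
        have hf0 : f = 0 := by
          funext w
          by_contra hw
          have : 0 < {w | f w ≠ 0}.ncard := by
            rw [Set.ncard_pos (Set.toFinite _)]
            exact ⟨w, hw⟩
          omega
        rw [hf0]
        exact Submodule.zero_mem _
      | succ k ih =>
        intro f hf hc
        by_cases hf0 : f = 0
        · rw [hf0]
          exact Submodule.zero_mem _
        · have hex : ∃ u, f u ≠ 0 := by
            by_contra hall
            push_neg at hall
            exact hf0 (funext fun w => hall w)
          obtain ⟨u, hu⟩ := hex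
          have heven : Even ({w | f w ≠ 0}.ncard) := by
            have h1 : (∑ w : V, f w) = (({w | f w ≠ 0}).ncard : ZMod 2) := by
              rw [← sum_indi_verts (fun w => f w ≠ 0)]
              apply Finset.sum_congr rfl
              intro w _
              rcases zmod2_cases (f w) with hfw | hfw
              · rw [hfw, indi_neg (by simp [hfw])]
              · rw [hfw, indi_pos (by simp [hfw])]
            have h2 : ((({w | f w ≠ 0}).ncard : ℕ) : ZMod 2) = 0 := by
              rw [← h1]
              exact hf
            rw [ZMod.natCast_eq_zero_iff] at h2
            exact even_iff_two_dvd.mpr h2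
          have hpos : 0 < {w | f w ≠ 0}.ncard := by
            rw [Set.ncard_pos (Set.toFinite _)]
            exact ⟨u, hu⟩
          have hcard2 : 1 < {w | f w ≠ 0}.ncard := by
            obtain ⟨r, hr⟩ := heven
            omega
          obtain ⟨u', hu'mem, hu'ne⟩ := Set.exists_ne_of_one_lt_ncard hcard2 u
          have hu' : f u' ≠ 0 := hu'mem
          set f' := f + (delta u + delta u') with hf'def
          have hdmem : delta u + delta u' ∈ LinearMap.range (bndL G) := by
            obtain ⟨p0⟩ := hconn.preconnected u u'
            have hnd : p0.toPath.val.edges.Nodup := p0.toPath.2.isTrail.edges_nodup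
            refine ⟨chi G {e | e ∈ (p0.toPath : G.Walk u u').edges}, ?_⟩
            rw [bnd_chi_walk _ hnd]
            funext w
            rfl
          have hf'sum : sumF f' = 0 := by
            rw [hf'def, map_add, map_add, hf, sumF_delta, sumF_delta]
            decide
          have hval : ∀ w, f' w = f w + indi (w = u) + indi (w = u') := by
            intro w
            rw [hf'def]
            simp only [Pi.add_apply, delta]
            ring
          have hfu1 : f u = 1 := by
            rcases zmod2_cases (f u) with hfw | hfw
            · exact absurd hfw hu
            · exact hfw
          have hfu'1 : f u' = 1 := by
            rcases zmod2_cases (f u') with hfw | hfw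
            · exact absurd hfw hu'
            · exact hfw
          have hsupp' : {w | f' w ≠ 0} = {w | f w ≠ 0} \ {u, u'} := by
            ext w
            simp only [Set.mem_setOf_eq, Set.mem_diff, Set.mem_insert_iff,
              Set.mem_singleton_iff]
            rw [hval w]
            by_cases hwu : w = u
            · rw [hwu, hfu1, indi_pos rfl, indi_neg hu'ne.symm, add_zero]
              constructor
              · intro hx
                exact absurd (show (1 : ZMod 2) + 1 = 0 by decide) hx
              · rintro ⟨-, hx⟩
                exact absurd (Or.inl rfl) hx
            · by_cases hwu' : w = u'
              · rw [hwu', hfu'1, indi_neg hu'ne, indi_pos rfl]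
                constructor
                · intro hx
                  exact absurd (show (1 : ZMod 2) + 0 + 1 = 0 by decide) hx
                · rintro ⟨-, hx⟩
                  exact absurd (Or.inr rfl) hx
              · rw [indi_neg hwu, indi_neg hwu', add_zero, add_zero]
                constructor
                · intro hx
                  refine ⟨hx, ?_⟩
                  rintro (rfl | rfl)
                  · exact hwu rfl
                  · exact hwu' rfl
                · rintro ⟨hx, -⟩
                  exact hx
          have hsubpair : ({u, u'} : Set V) ⊆ {w | f w ≠ 0} := by
            rintro w (rfl | rfl)
            · exact hu
            · exact hu'
          have hcard' : {w | f' w ≠ 0}.ncard ≤ k := by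
            have hdd := Set.ncard_diff_add_ncard_of_subset hsubpair (Set.toFinite _)
            have hpair : ({u, u'} : Set V).ncard = 2 := Set.ncard_pair hu'ne.symm
            rw [hsupp']
            omega
          have hmem' := ih f' hf'sum hcard'
          have hrepr : f = f' + (delta u + delta u') := by
            rw [hf'def, add_assoc, pi_add_self, add_zero]
          rw [hrepr]
          exact Submodule.add_mem _ hmem' hdmem
    exact key _ f hf le_rfl

end Graph

end CCproof

/-- If a connected finite graph has two chordless cycles with more than one common edge,
then it has strictly more than `e(G) - v(G) + 1` chordless cycles. -/
theorem card_chordless_cycles_gt [Fintype V] {G : SimpleGraph V}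
    (hconn : G.Connected)
    (h : ∃ S ∈ chordlessCycleSets G, ∃ T ∈ chordlessCycleSets G,
      S ≠ T ∧ 1 < (S ∩ T).ncard) :
    (G.edgeSet.ncard : ℤ) - (Nat.card V : ℤ) + 1 < ((chordlessCycleSets G).ncard : ℤ) := by
  classical
  obtain ⟨S1, hS1, S2, hS2, hne, hcap⟩ := h
  haveI : Fintype ↥(chordlessCycleSets G) := Fintype.ofFinite _
  set b : ↥(chordlessCycleSets G) → (↥G.edgeSet → ZMod 2) :=
    fun S => CCproof.chi G (S : Set (Sym2 V)) with hbdef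
  have hnli : ¬ LinearIndependent (ZMod 2) b :=
    CCproof.not_linearIndependent hS1 hS2 hne hcap
  have hker_le : LinearMap.ker (CCproof.bndL G)
      ≤ Submodule.span (ZMod 2) (Set.range b) := by
    intro x hx
    obtain ⟨A, hAsub, hAsum, -, -⟩ :=
      CCproof.decompose_even (CCproof.suppS G x).ncard x le_rfl (LinearMap.mem_ker.mp hx)
    rw [← hAsum]
    refine Submodule.sum_mem _ fun S hS => Submodule.subset_span ⟨⟨S, hAsub hS⟩, rfl⟩
  have hrn1 := LinearMap.finrank_range_add_finrank_ker (CCproof.bndL G)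
  rw [Module.finrank_pi (ZMod 2)] at hrn1
  have hrn2 := LinearMap.finrank_range_add_finrank_ker (CCproof.sumF (V := V))
  rw [Module.finrank_pi (ZMod 2)] at hrn2
  have hr1 : Module.finrank (ZMod 2) ↥(LinearMap.range (CCproof.sumF (V := V))) = 1 := by
    have hsurj : Function.Surjective (CCproof.sumF (V := V)) := by
      intro c
      obtain ⟨v0⟩ := hconn.nonempty
      refine ⟨c • CCproof.delta v0, ?_⟩
      rw [map_smul, CCproof.sumF_delta, smul_eq_mul, mul_one]
    rw [LinearMap.range_eq_top.mpr hsurj, finrank_top, Module.finrank_self]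
  have hre := CCproof.range_bndL (G := G) hconn
  have hk : Module.finrank (ZMod 2) ↥(LinearMap.range (CCproof.bndL G)) + 1
      = Fintype.card V := by
    rw [hre]
    rw [hr1] at hrn2
    omega
  have hkd : Module.finrank (ZMod 2) ↥(LinearMap.ker (CCproof.bndL G))
      ≤ Module.finrank (ZMod 2) ↥(Submodule.span (ZMod 2) (Set.range b)) :=
    Submodule.finrank_mono hker_le
  have hdle : Module.finrank (ZMod 2) ↥(Submodule.span (ZMod 2) (Set.range b))
      ≤ Fintype.card ↥(chordlessCycleSets G) :=
    finrank_range_le_card b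
  have hdne : Module.finrank (ZMod 2) ↥(Submodule.span (ZMod 2) (Set.range b))
      ≠ Fintype.card ↥(chordlessCycleSets G) := by
    intro hEq
    apply hnli
    rw [linearIndependent_iff_card_eq_finrank_span]
    exact hEq.symm
  have hm : G.edgeSet.ncard = Fintype.card ↥G.edgeSet := by
    rw [← Nat.card_coe_set_eq, Nat.card_eq_fintype_card]
  have hc : (chordlessCycleSets G).ncard = Fintype.card ↥(chordlessCycleSets G) := by
    rw [← Nat.card_coe_set_eq, Nat.card_eq_fintype_card]
  have hv : Nat.card V = Fintype.card V := Nat.card_eq_fintype_card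
  rw [hm, hc, hv]
  omega
end

section
/- Let H_n be the graph with vertices {x, y, u_1, v_1, ..., u_n, v_n} and edges {(x,u_i), (y,v_i), (u_i,v_i) : 1 ≤ i ≤ n} (so G_n with the edge (x,y) removed). Then the chordless cycles of H_n are exactly the cycles x,u_i,v_i,y,v_j,u_j for i < j, and hence H_n has exactly binomial(n,2) chordless cycles. -/
open SimpleGraph
variable {V : Type*}

/-- The vertices of the graph `H_n`: `x`, `y`, and `u i`, `v i` for `i : Fin n`. -/
inductive HVert (n : ℕ) : Type
  | x : HVert n
  | y : HVert n
  | u : Fin n → HVert n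
  | v : Fin n → HVert n
  deriving DecidableEq

/-- The graph `H_n`, with edges `(x, u i)`, `(y, v i)`, `(u i, v i)` for `1 ≤ i ≤ n`
(that is, `G_n` with the edge `(x,y)` removed). -/
def Hn (n : ℕ) : SimpleGraph (HVert n) :=
  SimpleGraph.fromRel (fun a b =>
    (∃ i, a = HVert.x ∧ b = HVert.u i) ∨
    (∃ i, a = HVert.y ∧ b = HVert.v i) ∨
    (∃ i, a = HVert.u i ∧ b = HVert.v i))


section Aux
section Generic
variable {G : SimpleGraph V}

lemma path_no_dart_fst_end {a w : V} {p : G.Walk a w} (hp : p.IsPath) {d : G.Dart}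
    (hd : d ∈ p.darts) : d.fst ≠ w := by
  intro h
  have hmap : d.fst ∈ p.support.dropLast := by
    rw [← SimpleGraph.Walk.map_fst_darts]
    exact List.mem_map_of_mem hd
  have hsup := hp.support_nodup
  have hne : p.support ≠ [] := p.support_ne_nil
  have heq : p.support = p.support.dropLast ++ [p.support.getLast hne] :=
    (List.dropLast_append_getLast hne).symm
  rw [heq] at hsup
  exact (List.nodup_append'.mp hsup).2.2 hmap (by simp [h, p.getLast_support])

lemma path_dart_snd_unique {a w : V} {p : G.Walk a w} (hp : p.IsPath) {d₁ d₂ : G.Dart}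
    (h₁ : d₁ ∈ p.darts) (h₂ : d₂ ∈ p.darts) (hs : d₁.snd = d₂.snd) : d₁ = d₂ := by
  have hnd : (p.darts.map (·.snd)).Nodup := by
    rw [p.map_snd_darts]
    exact hp.support_nodup.tail
  exact List.inj_on_of_nodup_map hnd h₁ h₂ hs

/-- In a cycle, a vertex on the cycle has exactly two neighbours along the cycle. -/
lemma cycle_two_nbrs {v₀ : V} {c : G.Walk v₀ v₀} (hc : c.IsCycle) {w : V}
    (hw : w ∈ c.support) :
    ∃ a b, a ≠ b ∧ s(w, a) ∈ c.edges ∧ s(w, b) ∈ c.edges ∧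
      ∀ z, s(w, z) ∈ c.edges → z = a ∨ z = b := by
  classical
  have hrot : ∀ e : Sym2 V, (e ∈ (c.rotate w hw).edges ↔ e ∈ c.edges) :=
    fun e => (c.rotate_edges w hw).mem_iff
  suffices h : ∃ a b, a ≠ b ∧ s(w, a) ∈ (c.rotate w hw).edges ∧ s(w, b) ∈ (c.rotate w hw).edges ∧
      ∀ z, s(w, z) ∈ (c.rotate w hw).edges → z = a ∨ z = b by
    obtain ⟨a, b, hab, ha, hb, huniq⟩ := h
    exact ⟨a, b, hab, (hrot _).mp ha, (hrot _).mp hb, fun z hz => huniq z ((hrot _).mpr hz)⟩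
  have hcyc' : (c.rotate w hw).IsCycle := hc.rotate hw
  generalize c.rotate w hw = c' at hcyc' ⊢
  clear hrot hc hw c
  cases c' with
  | nil => exact absurd hcyc' (SimpleGraph.Walk.IsCycle.not_of_nil)
  | @cons _ v₁ _ h p =>
    rw [SimpleGraph.Walk.cons_isCycle_iff] at hcyc'
    obtain ⟨hpath, hne⟩ := hcyc'
    have hpd : p.darts ≠ [] := by
      intro h0
      have : p.length = 0 := by
        have := congrArg List.length h0
        simpa [SimpleGraph.Walk.length_darts] using this
      exact h.ne' (SimpleGraph.Walk.eq_of_length_eq_zero this)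
    set d := p.darts.getLast hpd with hd
    have hdmem : d ∈ p.darts := List.getLast_mem hpd
    have hdsnd : d.snd = w := by rw [hd, p.getLast_darts_eq_lastDart hpd]; rfl
    refine ⟨v₁, d.fst, ?_, ?_, ?_, ?_⟩
    · intro hEq
      apply hne
      have : d.edge = s(w, v₁) := by
        rw [show d.edge = s(d.fst, d.snd) from rfl, hdsnd, ← hEq, Sym2.eq_swap]
      rw [← this]
      exact List.mem_map_of_mem hdmem
    · simp [SimpleGraph.Walk.edges_cons]
    · rw [SimpleGraph.Walk.edges_cons]
      refine List.mem_cons_of_mem _ ?_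
      have : d.edge = s(d.fst, w) := by rw [show d.edge = s(d.fst, d.snd) from rfl, hdsnd]
      have h2 : s(w, d.fst) = d.edge := by rw [this, Sym2.eq_swap]
      rw [h2]
      exact List.mem_map_of_mem hdmem
    · intro z hz
      rw [SimpleGraph.Walk.edges_cons, List.mem_cons] at hz
      rcases hz with hz | hz
      · left; exact (Sym2.congr_right.mp hz.symm).symm
      · right
        obtain ⟨d', hd'mem, hd'edge⟩ := List.mem_map.mp hz
        rw [show d'.edge = s(d'.fst, d'.snd) from rfl, Sym2.eq_iff] at hd'edge
        rcases hd'edge with ⟨h1, h2⟩ | ⟨h1, h2⟩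
        · exact absurd h1 (path_no_dart_fst_end hpath hd'mem)
        · have : d' = d := path_dart_snd_unique hpath hd'mem hdmem (by rw [h2, hdsnd])
          rw [← this, h1]

end Generic

open HVert in
lemma hn_adj {n : ℕ} {a b : HVert n} : (Hn n).Adj a b ↔
    (∃ i, (a = x ∧ b = u i) ∨ (a = u i ∧ b = x) ∨ (a = y ∧ b = v i) ∨ (a = v i ∧ b = y) ∨
      (a = u i ∧ b = v i) ∨ (a = v i ∧ b = u i)) := by
  cases a <;> cases b <;> simp [Hn, SimpleGraph.fromRel_adj] <;> aesop

open HVert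

lemma adj_x {n : ℕ} {z : HVert n} : (Hn n).Adj x z ↔ ∃ i, z = u i := by
  rw [hn_adj]; cases z <;> simp

lemma adj_y' {n : ℕ} {z : HVert n} : (Hn n).Adj y z ↔ ∃ i, z = v i := by
  rw [hn_adj]; cases z <;> simp

lemma adj_u {n : ℕ} {k : Fin n} {z : HVert n} : (Hn n).Adj (u k) z ↔ z = x ∨ z = v k := by
  rw [hn_adj]; cases z <;> simp <;> aesop

lemma adj_v {n : ℕ} {k : Fin n} {z : HVert n} : (Hn n).Adj (v k) z ↔ z = y ∨ z = u k := by
  rw [hn_adj]; cases z <;> simp <;> aesop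

lemma adj_xu {n : ℕ} (i : Fin n) : (Hn n).Adj x (u i) := adj_x.mpr ⟨i, rfl⟩
lemma adj_uv {n : ℕ} (i : Fin n) : (Hn n).Adj (u i) (v i) := adj_u.mpr (Or.inr rfl)
lemma adj_vy {n : ℕ} (i : Fin n) : (Hn n).Adj (v i) y := adj_v.mpr (Or.inl rfl) |>.symm |>.symm
lemma adj_yv {n : ℕ} (i : Fin n) : (Hn n).Adj y (v i) := adj_y'.mpr ⟨i, rfl⟩

/-- the six-cycle through branches i and j -/
def sixWalk {n : ℕ} (i j : Fin n) : (Hn n).Walk x x :=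
  .cons (adj_xu i) (.cons (adj_uv i) (.cons (adj_vy i) (.cons (adj_yv j)
    (.cons ((adj_uv j).symm) (.cons ((adj_xu j).symm) .nil)))))

lemma sixWalk_edges {n : ℕ} (i j : Fin n) : (sixWalk i j).edges =
    [s(x, u i), s(u i, v i), s(v i, y), s(y, v j), s(v j, u j), s(u j, x)] := by
  simp [sixWalk]

lemma sixWalk_support {n : ℕ} (i j : Fin n) : (sixWalk i j).support =
    [x, u i, v i, y, v j, u j, x] := by
  simp [sixWalk]

lemma sixWalk_isCycle {n : ℕ} {i j : Fin n} (hij : i ≠ j) : (sixWalk i j).IsCycle := by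
  rw [SimpleGraph.Walk.isCycle_def]
  refine ⟨(SimpleGraph.Walk.isTrail_def _).mpr ?_, by simp [sixWalk], ?_⟩
  · rw [sixWalk_edges]
    simp [hij, hij.symm]
  · have h := sixWalk_support i j
    rw [h]
    simp [hij, hij.symm]

def sixSet {n : ℕ} (i j : Fin n) : Set (Sym2 (HVert n)) :=
  {s(x, u i), s(u i, v i), s(v i, y), s(y, v j), s(v j, u j), s(u j, x)}

lemma sixWalk_edges_set {n : ℕ} (i j : Fin n) :
    {e | e ∈ (sixWalk i j).edges} = sixSet i j := by
  ext e
  simp [sixWalk_edges, sixSet]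

lemma sixSet_comm {n : ℕ} (i j : Fin n) : sixSet i j = sixSet j i := by
  ext e
  constructor <;>
  · rintro (rfl | rfl | rfl | rfl | rfl | rfl) <;> simp [sixSet, Sym2.eq_swap] <;> tauto

lemma sixWalk_chordless {n : ℕ} {i j : Fin n} (hij : i ≠ j) :
    ∀ a b, a ∈ (sixWalk i j).support → b ∈ (sixWalk i j).support → (Hn n).Adj a b →
      s(a, b) ∈ (sixWalk i j).edges := by
  intro a b ha hb hadj
  rw [sixWalk_support, List.mem_cons] at ha hb
  rw [hn_adj] at hadj
  obtain ⟨k, hcase⟩ := hadj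
  rw [sixWalk_edges]
  rcases hcase with ⟨rfl, rfl⟩ | ⟨rfl, rfl⟩ | ⟨rfl, rfl⟩ | ⟨rfl, rfl⟩ | ⟨rfl, rfl⟩ | ⟨rfl, rfl⟩ <;>
    simp_all <;> aesop (add simp [Sym2.eq_swap])

section Forward
variable {n : ℕ} {v₀ : HVert n} {c : (Hn n).Walk v₀ v₀}

/-- aux copy of cycle_two_nbrs for this file -/
lemma step_u (hc : c.IsCycle) {k : Fin n} (hk : u k ∈ c.support) :
    s(u k, x) ∈ c.edges ∧ s(u k, v k) ∈ c.edges := by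
  obtain ⟨a, b, hab, ha, hb, -⟩ := cycle_two_nbrs hc hk
  have ha' : a = x ∨ a = v k := adj_u.mp ((Hn n).mem_edgeSet.mp (c.edges_subset_edgeSet ha))
  have hb' : b = x ∨ b = v k := adj_u.mp ((Hn n).mem_edgeSet.mp (c.edges_subset_edgeSet hb))
  rcases ha' with rfl | rfl <;> rcases hb' with rfl | rfl <;> simp_all

lemma step_v (hc : c.IsCycle) {k : Fin n} (hk : v k ∈ c.support) :
    s(v k, y) ∈ c.edges ∧ s(v k, u k) ∈ c.edges := by
  obtain ⟨a, b, hab, ha, hb, -⟩ := cycle_two_nbrs hc hk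
  have ha' : a = y ∨ a = u k := adj_v.mp ((Hn n).mem_edgeSet.mp (c.edges_subset_edgeSet ha))
  have hb' : b = y ∨ b = u k := adj_v.mp ((Hn n).mem_edgeSet.mp (c.edges_subset_edgeSet hb))
  rcases ha' with rfl | rfl <;> rcases hb' with rfl | rfl <;> simp_all

lemma ux_mem_of_mem_support (hc : c.IsCycle) {k : Fin n} (hk : u k ∈ c.support) :
    s(u k, x) ∈ c.edges := (step_u hc hk).1

lemma forward (hc : c.IsCycle) :
    ∃ i j : Fin n, i ≠ j ∧ {e | e ∈ c.edges} = sixSet i j := by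
  classical
  -- find some u k on the cycle
  obtain ⟨k, hk⟩ : ∃ k, u k ∈ c.support := by
    have hlen := hc.three_le_length
    have hene : c.edges ≠ [] := by
      intro h
      rw [← SimpleGraph.Walk.length_edges, h] at hlen
      simp at hlen
    have he : c.edges.head hene ∈ c.edges := List.head_mem hene
    set e := c.edges.head hene with hedef
    clear_value e
    induction e using Sym2.ind with
    | _ a b =>
      have hadj : (Hn n).Adj a b := (Hn n).mem_edgeSet.mp (c.edges_subset_edgeSet he)
      rw [hn_adj] at hadj
      obtain ⟨m, hcase⟩ := hadj
      rcases hcase with ⟨rfl, rfl⟩ | ⟨rfl, rfl⟩ | ⟨rfl, rfl⟩ | ⟨rfl, rfl⟩ | ⟨rfl, rfl⟩ |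
          ⟨rfl, rfl⟩
      · exact ⟨m, c.snd_mem_support_of_mem_edges he⟩
      · exact ⟨m, c.fst_mem_support_of_mem_edges he⟩
      · have hv : v m ∈ c.support := c.snd_mem_support_of_mem_edges he
        exact ⟨m, c.snd_mem_support_of_mem_edges (step_v hc hv).2⟩
      · have hv : v m ∈ c.support := c.fst_mem_support_of_mem_edges he
        exact ⟨m, c.snd_mem_support_of_mem_edges (step_v hc hv).2⟩
      · exact ⟨m, c.fst_mem_support_of_mem_edges he⟩
      · exact ⟨m, c.snd_mem_support_of_mem_edges he⟩
  -- x is on the cycle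
  have hx : x ∈ c.support := c.snd_mem_support_of_mem_edges (step_u hc hk).1
  obtain ⟨a, b, hab, ha, hb, huniq⟩ := cycle_two_nbrs hc hx
  obtain ⟨i, rfl⟩ := adj_x.mp ((Hn n).mem_edgeSet.mp (c.edges_subset_edgeSet ha))
  obtain ⟨j, rfl⟩ := adj_x.mp ((Hn n).mem_edgeSet.mp (c.edges_subset_edgeSet hb))
  have hij : i ≠ j := fun h => hab (by rw [h])
  have hui : u i ∈ c.support := c.snd_mem_support_of_mem_edges ha
  have huj : u j ∈ c.support := c.snd_mem_support_of_mem_edges hb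
  have hstepi := step_u hc hui
  have hstepj := step_u hc huj
  have hvi : v i ∈ c.support := c.snd_mem_support_of_mem_edges hstepi.2
  have hvj : v j ∈ c.support := c.snd_mem_support_of_mem_edges hstepj.2
  have hstepvi := step_v hc hvi
  have hstepvj := step_v hc hvj
  refine ⟨i, j, hij, ?_⟩
  ext e
  simp only [Set.mem_setOf_eq]
  constructor
  · intro he
    have hadj : e ∈ (Hn n).edgeSet := c.edges_subset_edgeSet he
    induction e using Sym2.ind with
    | _ a b =>
      rw [SimpleGraph.mem_edgeSet, hn_adj] at hadj
      have key : ∀ m : Fin n, s(x, u m) ∈ c.edges → m = i ∨ m = j := by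
        intro m hm
        rcases huniq (u m) hm with h | h
        · left; exact HVert.u.inj h
        · right; exact HVert.u.inj h
      have keyu : ∀ m : Fin n, u m ∈ c.support → m = i ∨ m = j := by
        intro m hm
        exact key m (Sym2.eq_swap ▸ (step_u hc hm).1)
      obtain ⟨m, hcase⟩ := hadj
      rcases hcase with ⟨rfl, rfl⟩ | ⟨rfl, rfl⟩ | ⟨rfl, rfl⟩ | ⟨rfl, rfl⟩ | ⟨rfl, rfl⟩ |
          ⟨rfl, rfl⟩
      · rcases key m he with rfl | rfl <;> simp [sixSet, Sym2.eq_swap]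
      · rcases key m (Sym2.eq_swap ▸ he) with rfl | rfl <;> simp [sixSet, Sym2.eq_swap]
      · have hv : v m ∈ c.support := c.snd_mem_support_of_mem_edges he
        have hu : u m ∈ c.support := c.snd_mem_support_of_mem_edges (step_v hc hv).2
        rcases keyu m hu with rfl | rfl <;> simp [sixSet, Sym2.eq_swap]
      · have hv : v m ∈ c.support := c.fst_mem_support_of_mem_edges he
        have hu : u m ∈ c.support := c.snd_mem_support_of_mem_edges (step_v hc hv).2
        rcases keyu m hu with rfl | rfl <;> simp [sixSet, Sym2.eq_swap]
      · have hu : u m ∈ c.support := c.fst_mem_support_of_mem_edges he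
        rcases keyu m hu with rfl | rfl <;> simp [sixSet, Sym2.eq_swap]
      · have hu : u m ∈ c.support := c.snd_mem_support_of_mem_edges he
        rcases keyu m hu with rfl | rfl <;> simp [sixSet, Sym2.eq_swap]
  · intro he
    rcases he with rfl | rfl | rfl | rfl | rfl | rfl
    · exact ha
    · exact hstepi.2
    · exact hstepvi.1
    · exact Sym2.eq_swap ▸ hstepvj.1
    · exact Sym2.eq_swap ▸ hstepj.2
    · exact Sym2.eq_swap ▸ hb

end Forward

lemma xu_mem_sixSet_iff {n : ℕ} {i j m : Fin n} : s(x, u m) ∈ sixSet i j ↔ m = i ∨ m = j := by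
  simp only [sixSet, Set.mem_insert_iff, Set.mem_singleton_iff, Sym2.eq_iff]
  aesop

lemma yv_mem_sixSet_iff {n : ℕ} {i j m : Fin n} : s(y, v m) ∈ sixSet i j ↔ m = i ∨ m = j := by
  simp only [sixSet, Set.mem_insert_iff, Set.mem_singleton_iff, Sym2.eq_iff]
  aesop

lemma ordered_pair_eq {n : ℕ} {p1 p2 q1 q2 : Fin n} (h1 : p1 < p2) (h2 : q1 < q2)
    (ha : q1 = p1 ∨ q1 = p2) (hb : q2 = p1 ∨ q2 = p2) : q1 = p1 ∧ q2 = p2 := by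
  rcases ha with rfl | rfl <;> rcases hb with rfl | rfl
  · exact absurd h2 (lt_irrefl _)
  · exact ⟨rfl, rfl⟩
  · exact absurd h1 (lt_asymm h2)
  · exact absurd h2 (lt_irrefl _)

lemma sixSet_injOn {n : ℕ} : Set.InjOn (fun p : Fin n × Fin n => sixSet p.1 p.2)
    {p | p.1 < p.2} := by
  rintro ⟨p1, p2⟩ h1 ⟨q1, q2⟩ h2 heq
  simp only [Set.mem_setOf_eq] at h1 h2
  simp only at heq
  have ha : q1 = p1 ∨ q1 = p2 := xu_mem_sixSet_iff.mp (heq ▸ xu_mem_sixSet_iff.mpr (Or.inl rfl))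
  have hb : q2 = p1 ∨ q2 = p2 := yv_mem_sixSet_iff.mp (heq ▸ yv_mem_sixSet_iff.mpr (Or.inr rfl))
  obtain ⟨rfl, rfl⟩ := ordered_pair_eq h1 h2 ha hb
  rfl

lemma card_lt_pairs (n : ℕ) :
    (Finset.univ.filter fun p : Fin n × Fin n => p.1 < p.2).card = n.choose 2 := by
  classical
  rw [show n.choose 2 = ((Finset.univ : Finset (Fin n)).powersetCard 2).card by
    rw [Finset.card_powersetCard, Finset.card_univ, Fintype.card_fin]]
  apply Finset.card_nbij (i := fun p => ({p.1, p.2} : Finset (Fin n)))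
  · intro p hp
    simp only [Finset.coe_filter, Set.mem_setOf_eq] at hp
    rw [Finset.mem_coe, Finset.mem_powersetCard]
    exact ⟨Finset.subset_univ _, Finset.card_pair hp.2.ne⟩
  · rintro ⟨p1, p2⟩ h1 ⟨q1, q2⟩ h2 heq
    simp only [Finset.coe_filter, Set.mem_setOf_eq] at h1 h2
    simp only at heq
    have ha : q1 = p1 ∨ q1 = p2 := by
      have : q1 ∈ ({p1, p2} : Finset (Fin n)) := heq ▸ (by simp)
      simpa using this
    have hb : q2 = p1 ∨ q2 = p2 := by
      have : q2 ∈ ({p1, p2} : Finset (Fin n)) := heq ▸ (by simp)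
      simpa using this
    obtain ⟨rfl, rfl⟩ := ordered_pair_eq h1.2 h2.2 ha hb
    rfl
  · intro s hs
    rw [Finset.mem_coe, Finset.mem_powersetCard] at hs
    obtain ⟨a, b, hab, rfl⟩ := Finset.card_eq_two.mp hs.2
    rcases hab.lt_or_gt with h | h
    · exact ⟨(a, b), by simp [h], rfl⟩
    · refine ⟨(b, a), by simp [h], ?_⟩
      simp [Finset.pair_comm]

end Aux


/-- The chordless cycles of `H_n` are exactly the six-cycles `x,u i,v i,y,v j,u j` for
`i < j`, so there are `binomial(n,2)` of them. -/
theorem chordless_cycles_of_Hn (n : ℕ) :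
    chordlessCycleSets (Hn n) =
      {S | ∃ i j : Fin n, i < j ∧
        S = ({s(HVert.x, HVert.u i), s(HVert.u i, HVert.v i), s(HVert.v i, HVert.y),
              s(HVert.y, HVert.v j), s(HVert.v j, HVert.u j), s(HVert.u j, HVert.x)} :
              Set (Sym2 (HVert n)))} ∧
    (chordlessCycleSets (Hn n)).ncard = n.choose 2 := by
  have heq : chordlessCycleSets (Hn n) = {S | ∃ i j : Fin n, i < j ∧ S = sixSet i j} := by
    ext S
    simp only [chordlessCycleSets, Set.mem_setOf_eq, IsChordlessCycle]
    constructor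
    · rintro ⟨v₀, c, ⟨hcyc, -⟩, rfl⟩
      obtain ⟨i, j, hij, hS⟩ := forward hcyc
      rcases hij.lt_or_gt with h | h
      · exact ⟨i, j, h, hS⟩
      · exact ⟨j, i, h, hS.trans (sixSet_comm i j)⟩
    · rintro ⟨i, j, hij, rfl⟩
      exact ⟨HVert.x, sixWalk i j, ⟨sixWalk_isCycle hij.ne, sixWalk_chordless hij.ne⟩,
        (sixWalk_edges_set i j).symm⟩
  constructor
  · rw [heq]
    rfl
  · rw [heq]
    have himg : {S | ∃ i j : Fin n, i < j ∧ S = sixSet i j} =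
        (fun p : Fin n × Fin n => sixSet p.1 p.2) '' {p | p.1 < p.2} := by
      ext S
      simp only [Set.mem_image, Set.mem_setOf_eq, Prod.exists]
      constructor
      · rintro ⟨i, j, h, rfl⟩; exact ⟨i, j, h, rfl⟩
      · rintro ⟨i, j, h, rfl⟩; exact ⟨i, j, h, rfl⟩
    rw [himg, Set.ncard_image_of_injOn sixSet_injOn]
    have hco : {p : Fin n × Fin n | p.1 < p.2} =
        ↑(Finset.univ.filter fun p : Fin n × Fin n => p.1 < p.2) := by
      ext p; simp
    rw [hco, Set.ncard_coe_finset, card_lt_pairs]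
end
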